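/- arXiv:1910.05857 — 3 statements merged into one kernel-verified Lean document; each statement's English description precedes it below -/
import Mathlib

section
/- Let f : ℝ^d → ℝ be differentiable with L-Lipschitz gradient, let α > 0, and let u, y, g ∈ ℝ^d. Set u⁺ := u − αy. Then f(u⁺) ≤ f(u) − (α/2 − α²L/2)‖y‖² + α‖∇f(u) − g‖² + α‖g − y‖². -/
noncomputable section

open InnerProductSpace intervalIntegral

lemma descent_aux {d : ℕ} {L : ℝ} (hL : 0 ≤ L) {f : EuclideanSpace ℝ (Fin d) → ℝ}
    (hdiff : Differentiable ℝ f)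
    (hlip : ∀ u u' : EuclideanSpace ℝ (Fin d),
      ‖gradient f u - gradient f u'‖ ≤ L * ‖u - u'‖)
    (v h : EuclideanSpace ℝ (Fin d)) :
    f (v + h) ≤ f v + ⟪gradient f v, h⟫_ℝ + L / 2 * ‖h‖ ^ 2 := by
  have hg_cont : Continuous fun x => gradient f x := by
    have : LipschitzWith (Real.toNNReal L) (gradient f) := by
      apply LipschitzWith.of_dist_le_mul
      intro a b
      simpa [dist_eq_norm, Real.coe_toNNReal L hL] using hlip a b
    exact this.continuous
  have hline : Continuous fun t : ℝ => v + t • h := by continuity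
  have hφ : ∀ t : ℝ, HasDerivAt (fun t : ℝ => f (v + t • h))
      (⟪gradient f (v + t • h), h⟫_ℝ) t := by
    intro t
    have hl : HasDerivAt (fun t : ℝ => v + t • h) h t := by
      simpa using ((hasDerivAt_id t).smul_const h).const_add v
    have hf := ((hdiff (v + t • h)).hasGradientAt).hasFDerivAt
    have := hf.comp_hasDerivAt t hl
    exact this
  have hcont : Continuous fun t : ℝ => ⟪gradient f (v + t • h), h⟫_ℝ :=
    (hg_cont.comp hline).inner continuous_const
  have key : f (v + h) - f v = ∫ t in (0:ℝ)..1, ⟪gradient f (v + t • h), h⟫_ℝ := by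
    have := intervalIntegral.integral_eq_sub_of_hasDerivAt
      (fun t _ => hφ t) (hcont.intervalIntegrable 0 1)
    simpa using this.symm
  have hbound : ∀ t ∈ Set.Icc (0:ℝ) 1,
      ⟪gradient f (v + t • h), h⟫_ℝ ≤ ⟪gradient f v, h⟫_ℝ + L * t * ‖h‖ ^ 2 := by
    intro t ht
    have hsplit : ⟪gradient f (v + t • h), h⟫_ℝ
        = ⟪gradient f v, h⟫_ℝ + ⟪gradient f (v + t • h) - gradient f v, h⟫_ℝ := by
      rw [inner_sub_left]; ring
    have h1 : ⟪gradient f (v + t • h) - gradient f v, h⟫_ℝ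
        ≤ ‖gradient f (v + t • h) - gradient f v‖ * ‖h‖ := real_inner_le_norm _ _
    have h2 : ‖gradient f (v + t • h) - gradient f v‖ ≤ L * (t * ‖h‖) := by
      have := hlip (v + t • h) v
      simpa [norm_smul, abs_of_nonneg ht.1] using this
    have h3 : ‖gradient f (v + t • h) - gradient f v‖ * ‖h‖ ≤ L * t * ‖h‖ ^ 2 := by
      have := mul_le_mul_of_nonneg_right h2 (norm_nonneg h)
      nlinarith [norm_nonneg h]
    linarith [hsplit, h1, h3]
  have hint : (∫ t in (0:ℝ)..1, ⟪gradient f (v + t • h), h⟫_ℝ)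
      ≤ ∫ t in (0:ℝ)..1, (⟪gradient f v, h⟫_ℝ + L * t * ‖h‖ ^ 2) := by
    apply intervalIntegral.integral_mono_on (by norm_num)
      (hcont.intervalIntegrable 0 1)
      ((by continuity : Continuous fun t : ℝ =>
        ⟪gradient f v, h⟫_ℝ + L * t * ‖h‖ ^ 2).intervalIntegrable 0 1)
    exact hbound
  have hval : (∫ t in (0:ℝ)..1, (⟪gradient f v, h⟫_ℝ + L * t * ‖h‖ ^ 2))
      = ⟪gradient f v, h⟫_ℝ + L / 2 * ‖h‖ ^ 2 := by
    have heq : (fun t : ℝ => ⟪gradient f v, h⟫_ℝ + L * t * ‖h‖ ^ 2)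
        = fun t : ℝ => ⟪gradient f v, h⟫_ℝ + (L * ‖h‖ ^ 2) * t := by
      funext t; ring
    rw [heq, intervalIntegral.integral_add intervalIntegrable_const
      ((by fun_prop : Continuous fun t : ℝ => L * ‖h‖ ^ 2 * t).intervalIntegrable 0 1),
      intervalIntegral.integral_const_mul, integral_id]
    simp
    ring
  linarith [key, hint, hval ▸ hint]

/-- descent estimate for one step `u⁺ = u − αy` along an inexact direction `y`,
for `f` differentiable with `L`-Lipschitz gradient:
`f(u⁺) ≤ f(u) − (α/2 − α²L/2)‖y‖² + α‖∇f(u) − g‖² + α‖g − y‖²`. -/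
theorem stmt5 (d : ℕ) (L α : ℝ) (hL : 0 ≤ L) (hα : 0 < α)
    (f : EuclideanSpace ℝ (Fin d) → ℝ)
    (hdiff : Differentiable ℝ f)
    (hlip : ∀ u u' : EuclideanSpace ℝ (Fin d),
      ‖gradient f u - gradient f u'‖ ≤ L * ‖u - u'‖)
    (u y g : EuclideanSpace ℝ (Fin d)) :
    f (u - α • y) ≤
      f u - (α / 2 - α ^ 2 * L / 2) * ‖y‖ ^ 2 + α * ‖gradient f u - g‖ ^ 2 +
        α * ‖g - y‖ ^ 2 := by
  have hd := descent_aux hL hdiff hlip u (-(α • y))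
  rw [show u + -(α • y) = u - α • y by abel] at hd
  have hnorm : ‖-(α • y)‖ ^ 2 = α ^ 2 * ‖y‖ ^ 2 := by
    rw [norm_neg, norm_smul]
    simp [abs_of_pos hα, mul_pow]
  have hinner : ⟪gradient f u, -(α • y)⟫_ℝ = -(α * ⟪gradient f u, y⟫_ℝ) := by
    rw [inner_neg_right, real_inner_smul_right]
  have hsplit : ⟪gradient f u, y⟫_ℝ
      = ⟪gradient f u - g, y⟫_ℝ + ⟪g - y, y⟫_ℝ + ‖y‖ ^ 2 := by
    rw [inner_sub_left, inner_sub_left, real_inner_self_eq_norm_sq]; ring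
  have h1 : -⟪gradient f u - g, y⟫_ℝ ≤ ‖gradient f u - g‖ * ‖y‖ :=
    (neg_le_abs _).trans (abs_real_inner_le_norm _ _)
  have h2 : -⟪g - y, y⟫_ℝ ≤ ‖g - y‖ * ‖y‖ :=
    (neg_le_abs _).trans (abs_real_inner_le_norm _ _)
  have amgm1 : ‖gradient f u - g‖ * ‖y‖ ≤ ‖gradient f u - g‖ ^ 2 + ‖y‖ ^ 2 / 4 := by
    nlinarith [sq_nonneg (‖gradient f u - g‖ - ‖y‖ / 2)]
  have amgm2 : ‖g - y‖ * ‖y‖ ≤ ‖g - y‖ ^ 2 + ‖y‖ ^ 2 / 4 := by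
    nlinarith [sq_nonneg (‖g - y‖ - ‖y‖ / 2)]
  rw [hnorm, hinner] at hd
  nlinarith [hd, hsplit, h1, h2, amgm1, amgm2, hα.le]
end
end

section
/- In the decentralized finite-sum setting with the D-GET algorithm, for every iteration r with (n_r − 1)q ≤ r ≤ n_r q − 1 (where n_r = ⌊r/q⌋ + 1), the global gradient-tracking error satisfies E‖ȳ^r − (1/m)∑_{i=1}^m ∇f^i(x_i^r)‖² ≤ (8L²/(m|S₂|))∑_{t=(n_r−1)q}^{r} E‖x^t − 𝟙x̄^t‖² + (4α²L²/(m|S₂|))∑_{t=(n_r−1)q}^{r} E‖y^t − 𝟙ȳ^t‖² + (4α²L²/|S₂|)∑_{t=(n_r−1)q}^{r} E‖ȳ^t‖² + E‖ȳ^{(n_r−1)q} − (1/m)∑_{i=1}^m ∇f^i(x_i^{(n_r−1)q})‖². -/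
open Finset MeasureTheory ProbabilityTheory

noncomputable section

/-- Euclidean space `ℝ^d`. -/
abbrev Vec (d : ℕ) := EuclideanSpace ℝ (Fin d)

/-- Stacked space `(ℝ^d)^m` with the Euclidean (ℓ²) norm. -/
abbrev Stack (m d : ℕ) := PiLp 2 (fun _ : Fin m => Vec d)

/-- Blockwise action of an `m × m` matrix on `(ℝ^d)^m`. -/
def Wact {m d : ℕ} (W : Matrix (Fin m) (Fin m) ℝ) (x : Stack m d) : Stack m d :=
  WithLp.toLp 2 (fun i => ∑ k, W i k • x k)

/-- Matrix-vector product, valued in Euclidean space. -/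
def mulVecE {m : ℕ} (W : Matrix (Fin m) (Fin m) ℝ) (u : Vec m) : Vec m :=
  WithLp.toLp 2 (fun i => ∑ k, W i k * u k)

/-- Block average `x̄ = (1/m) ∑ᵢ xᵢ`. -/
def blockAvg {m d : ℕ} (x : Stack m d) : Vec d := (m : ℝ)⁻¹ • ∑ i, x i

/-- The stacked vector `𝟙 u` all of whose `m` blocks equal `u`. -/
def oneVec {m d : ℕ} (u : Vec d) : Stack m d := WithLp.toLp 2 (fun _ => u)

/-- Local cost of node `i` in the finite-sum setting: `fᶦ = (1/n) ∑ⱼ fᶦⱼ`. -/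
def fLoc {m d n : ℕ} (f : Fin m → Fin n → Vec d → ℝ) (i : Fin m) : Vec d → ℝ :=
  fun w => (n : ℝ)⁻¹ * ∑ j, f i j w

/-- Global cost `f = (1/m) ∑ᵢ fᶦ`. -/
def fTot {m d n : ℕ} (f : Fin m → Fin n → Vec d → ℝ) : Vec d → ℝ :=
  fun w => (m : ℝ)⁻¹ * ∑ i, fLoc f i w

/-- Stacked gradient `G(x) = (∇f¹(x₁),…,∇fᵐ(x_m))`. -/
def Gmap {m d n : ℕ} (f : Fin m → Fin n → Vec d → ℝ) (x : Stack m d) : Stack m d :=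
  WithLp.toLp 2 (fun i => gradient (fLoc f i) (x i))

/-- Network-average gradient `(1/m) ∑ᵢ ∇fᶦ(xᵢ)`. -/
def avgGrad {m d n : ℕ} (f : Fin m → Fin n → Vec d → ℝ) (x : Stack m d) : Vec d :=
  (m : ℝ)⁻¹ • ∑ i, gradient (fLoc f i) (x i)

/-! ### Auxiliary material -/

open RealInnerProductSpace

set_option linter.unusedSectionVars false

section DepOnSection

variable {Ω : Type} {n : ℕ} {ι : Type*} [DecidableEq ι]

/-- `g` depends only on the values of the random indices `J p` for `p ∈ T`. -/
def DepOn (J : ι → Ω → Fin n) {β : Type*} (g : Ω → β) (T : Finset ι) : Prop :=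
  ∃ φ : ({p // p ∈ T} → Fin n) → β, ∀ ω, g ω = φ (fun p => J p.1 ω)

namespace DepOn

variable {J : ι → Ω → Fin n} {T T' : Finset ι} {β γ : Type*}

lemma const (b : β) : DepOn J (fun _ => b) T := ⟨fun _ => b, fun _ => rfl⟩

lemma apply {p : ι} (hp : p ∈ T) : DepOn J (J p) T := ⟨fun c => c ⟨p, hp⟩, fun _ => rfl⟩

lemma mono (hT : T ⊆ T') {g : Ω → β} (h : DepOn J g T) : DepOn J g T' := by
  obtain ⟨φ, hφ⟩ := h
  exact ⟨fun c => φ (fun p => c ⟨p.1, hT p.2⟩), hφ⟩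

lemma comp {g : Ω → β} (h : DepOn J g T) (u : β → γ) : DepOn J (fun ω => u (g ω)) T := by
  obtain ⟨φ, hφ⟩ := h
  exact ⟨fun c => u (φ c), fun ω => by show u (g ω) = _; rw [hφ]⟩

lemma pair {g₁ : Ω → β} {g₂ : Ω → γ} (h₁ : DepOn J g₁ T) (h₂ : DepOn J g₂ T) :
    DepOn J (fun ω => (g₁ ω, g₂ ω)) T := by
  obtain ⟨φ₁, hφ₁⟩ := h₁; obtain ⟨φ₂, hφ₂⟩ := h₂
  exact ⟨fun c => (φ₁ c, φ₂ c), fun ω => by show (g₁ ω, g₂ ω) = _; rw [hφ₁, hφ₂]⟩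

lemma map₂ {g₁ : Ω → β} {g₂ : Ω → γ} {δ : Type*} (u : β → γ → δ)
    (h₁ : DepOn J g₁ T) (h₂ : DepOn J g₂ T) :
    DepOn J (fun ω => u (g₁ ω) (g₂ ω)) T :=
  (h₁.pair h₂).comp fun p => u p.1 p.2

lemma tuple {κ : Type*} (e : κ → ι) (he : ∀ k, e k ∈ T) :
    DepOn J (fun ω => (fun k : κ => J (e k) ω)) T :=
  ⟨fun c k => c ⟨e k, he k⟩, fun _ => rfl⟩

lemma fintypePi {κ : Type*} {βk : κ → Type*} {g : (k : κ) → Ω → βk k}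
    (h : ∀ k, DepOn J (g k) T) :
    DepOn J (fun ω => (fun k => g k ω)) T := by
  choose φ hφ using h
  exact ⟨fun c k => φ k c, fun ω => funext fun k => hφ k ω⟩

lemma measurable [MeasurableSpace Ω] (hJ : ∀ p, Measurable (J p)) {β : Type*} [MeasurableSpace β]
    {g : Ω → β} (h : DepOn J g T) : Measurable g := by
  obtain ⟨φ, hφ⟩ := h
  have h1 : Measurable (fun ω => (fun p : {p // p ∈ T} => J p.1 ω)) :=
    measurable_pi_lambda _ fun p => hJ p.1
  have h2 : Measurable φ := measurable_of_countable φ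
  have : g = φ ∘ (fun ω => (fun p : {p // p ∈ T} => J p.1 ω)) := funext hφ
  rw [this]; exact h2.comp h1

lemma bound (hn : 0 < n) {g : Ω → ℝ} (h : DepOn J g T) : ∃ C, ∀ ω, |g ω| ≤ C := by
  haveI : NeZero n := ⟨hn.ne'⟩
  obtain ⟨φ, hφ⟩ := h
  refine ⟨Finset.univ.sup' ⟨Classical.arbitrary _, Finset.mem_univ _⟩ (fun c => |φ c|),
    fun ω => ?_⟩
  rw [hφ]
  exact Finset.le_sup' (fun c => |φ c|) (Finset.mem_univ _)

lemma integrable [MeasurableSpace Ω] (μ : Measure Ω) [IsProbabilityMeasure μ] (hn : 0 < n)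
    (hJ : ∀ p, Measurable (J p)) {g : Ω → ℝ} (h : DepOn J g T) : Integrable g μ := by
  obtain ⟨C, hC⟩ := h.bound hn
  exact (integrable_const C).mono' (h.measurable hJ).aestronglyMeasurable
    (ae_of_all _ fun ω => by simpa [Real.norm_eq_abs] using hC ω)

end DepOn

/-- Key integral splitting lemma: if `g j` depends only on indices in `T` and `p₀ ∉ T`, then
integrating `g` evaluated at the uniform independent index `J p₀` averages over `j`. -/
lemma keyint [MeasurableSpace Ω] (μ : Measure Ω) [IsProbabilityMeasure μ] (hn : 0 < n)
    (J : ι → Ω → Fin n) (hJmeas : ∀ p, Measurable (J p))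
    (hJunif : ∀ p j, μ {ω | J p ω = j} = (n : ENNReal)⁻¹)
    (hJindep : iIndepFun J μ)
    (p₀ : ι) (T : Finset ι) (hp₀ : p₀ ∉ T)
    (g : Fin n → Ω → ℝ) (hdep : ∀ j, DepOn J (g j) T) :
    ∫ ω, g (J p₀ ω) ω ∂μ = (n : ℝ)⁻¹ * ∑ j, ∫ ω, g j ω ∂μ := by
  haveI : NeZero n := ⟨hn.ne'⟩
  set e : Fin n → Ω → ℝ := fun j ω => if J p₀ ω = j then 1 else 0 with he
  have hint : ∀ j, Integrable (g j) μ := fun j => (hdep j).integrable μ hn hJmeas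
  have hpt : ∀ ω, g (J p₀ ω) ω = ∑ j, e j ω * g j ω := by
    intro ω
    rw [Finset.sum_eq_single (J p₀ ω)]
    · simp [he]
    · intro j _ hj; simp [he, Ne.symm hj]
    · simp
  have hie : ∀ j, Integrable (fun ω => e j ω * g j ω) μ := by
    intro j
    have hm : Measurable (e j) :=
      (measurable_of_countable (fun k : Fin n => if k = j then (1:ℝ) else 0)).comp (hJmeas p₀)
    obtain ⟨C, hC⟩ := (hdep j).bound hn
    refine (integrable_const C).mono' (hm.mul ((hdep j).measurable hJmeas)).aestronglyMeasurable
      (ae_of_all _ fun ω => ?_)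
    have h1 : |e j ω| ≤ 1 := by simp only [he]; split_ifs <;> norm_num
    have h2 : |e j ω * g j ω| ≤ |g j ω| := by
      rw [abs_mul]; exact mul_le_of_le_one_left (abs_nonneg _) h1
    calc ‖e j ω * g j ω‖ = |e j ω * g j ω| := rfl
      _ ≤ |g j ω| := h2
      _ ≤ C := hC ω
  calc ∫ ω, g (J p₀ ω) ω ∂μ = ∫ ω, ∑ j, e j ω * g j ω ∂μ :=
        integral_congr_ae (ae_of_all _ hpt)
    _ = ∑ j, ∫ ω, e j ω * g j ω ∂μ := integral_finset_sum _ fun j _ => hie j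
    _ = ∑ j, (n : ℝ)⁻¹ * ∫ ω, g j ω ∂μ := by
        refine Finset.sum_congr rfl fun j _ => ?_
        obtain ⟨φ, hφ⟩ := hdep j
        have hInd : IndepFun (fun ω => (fun p : ({p₀} : Finset ι) => J p.1 ω))
            (fun ω => (fun p : {p // p ∈ T} => J p.1 ω)) μ :=
          hJindep.indepFun_finset {p₀} T (Finset.disjoint_singleton_left.mpr hp₀) hJmeas
        have hIndeg : IndepFun (e j) (g j) μ := by
          have h3 := hInd.comp (φ := fun c : ({p₀} : Finset ι) → Fin n =>
              if c ⟨p₀, Finset.mem_singleton_self p₀⟩ = j then (1:ℝ) else 0) (ψ := φ)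
            (measurable_of_countable _) (measurable_of_countable _)
          have he2 : e j = (fun c : ({p₀} : Finset ι) → Fin n =>
              if c ⟨p₀, Finset.mem_singleton_self p₀⟩ = j then (1:ℝ) else 0) ∘
              (fun ω => (fun p : ({p₀} : Finset ι) => J p.1 ω)) := rfl
          have hg2 : g j = φ ∘ (fun ω => (fun p : {p // p ∈ T} => J p.1 ω)) := funext hφ
          rw [he2, hg2]; exact h3
        have hmul : ∫ ω, e j ω * g j ω ∂μ = (∫ ω, e j ω ∂μ) * ∫ ω, g j ω ∂μ := by
          have h4 := hIndeg.integral_mul_eq_mul_integral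
            (((measurable_of_countable (fun k : Fin n => if k = j then (1:ℝ) else 0)).comp
              (hJmeas p₀)) : Measurable (e j)).aestronglyMeasurable
            ((hdep j).measurable hJmeas).aestronglyMeasurable
          simpa [Pi.mul_apply] using h4
        rw [hmul]
        congr 1
        have h5 : (fun ω => e j ω) = Set.indicator {ω | J p₀ ω = j} (fun _ => (1:ℝ)) := by
          funext ω
          by_cases h : J p₀ ω = j <;> simp [he, h, Set.indicator_apply, Set.mem_setOf_eq]
        rw [h5, integral_indicator_const]
        · rw [measureReal_def, hJunif p₀ j]
          simp [ENNReal.toReal_inv]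
        · exact (hJmeas p₀) (MeasurableSet.singleton j)
    _ = (n : ℝ)⁻¹ * ∑ j, ∫ ω, g j ω ∂μ := by rw [Finset.mul_sum]

end DepOnSection

section Det
variable {m d : ℕ}

lemma stack_norm_sq (z : Stack m d) : ‖z‖^2 = ∑ i, ‖z i‖^2 := PiLp.norm_sq_eq_of_L2 _ z

lemma vec_norm_sq (w : Vec d) : ‖w‖^2 = ∑ s, (w s)^2 := by
  rw [PiLp.norm_sq_eq_of_L2]; simp [sq_abs]

lemma blockAvg_add (u v : Stack m d) : blockAvg (u + v) = blockAvg u + blockAvg v := by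
  simp [blockAvg, Finset.sum_add_distrib, smul_add]

lemma blockAvg_sub (u v : Stack m d) : blockAvg (u - v) = blockAvg u - blockAvg v := by
  simp [blockAvg, Finset.sum_sub_distrib, smul_sub]

lemma blockAvg_Wact (W : Matrix (Fin m) (Fin m) ℝ) (hWsymm : W.IsSymm)
    (hW1 : W.mulVec (fun _ => (1 : ℝ)) = fun _ => (1 : ℝ)) (u : Stack m d) :
    blockAvg (Wact W u) = blockAvg u := by
  have hrow : ∀ i, ∑ k, W i k = 1 := by
    intro i
    have := congrFun hW1 i
    simpa [Matrix.mulVec, dotProduct] using this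
  have hcol : ∀ k, ∑ i, W i k = 1 := by
    intro k
    have h : ∀ i, W i k = W k i := fun i => by
      conv_lhs => rw [← hWsymm]
      rfl
    simp_rw [h]; exact hrow k
  unfold blockAvg Wact
  congr 1
  calc ∑ i, ∑ k, W i k • u k = ∑ k, ∑ i, W i k • u k := Finset.sum_comm
    _ = ∑ k, (∑ i, W i k) • u k := by
        refine Finset.sum_congr rfl fun k _ => ?_
        rw [Finset.sum_smul]
    _ = ∑ k, u k := by simp_rw [hcol]; simp

lemma Wact_oneVec (W : Matrix (Fin m) (Fin m) ℝ)
    (hW1 : W.mulVec (fun _ => (1 : ℝ)) = fun _ => (1 : ℝ)) (c : Vec d) :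
    Wact W (oneVec c) = oneVec c := by
  refine PiLp.ext fun i => ?_
  show ∑ k, W i k • c = c
  rw [← Finset.sum_smul]
  have h : ∑ k, W i k = 1 := by
    have := congrFun hW1 i
    simpa [Matrix.mulVec, dotProduct] using this
  rw [h, one_smul]

lemma Wact_add (W : Matrix (Fin m) (Fin m) ℝ) (a b : Stack m d) :
    Wact W (a + b) = Wact W a + Wact W b := by
  refine PiLp.ext fun i => ?_
  show ∑ k, W i k • (a + b) k = (∑ k, W i k • a k) + ∑ k, W i k • b k
  rw [← Finset.sum_add_distrib]
  refine Finset.sum_congr rfl fun k _ => ?_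
  show W i k • (a k + b k) = _
  rw [smul_add]

lemma Wact_contract {η : ℝ} (hη0 : 0 ≤ η) (W : Matrix (Fin m) (Fin m) ℝ)
    (hWcontract : ∀ u : Vec m, (∑ k, u k) = 0 → ‖mulVecE W u‖ ≤ η * ‖u‖)
    (u : Stack m d) (hu : ∑ i, u i = 0) : ‖Wact W u‖ ≤ η * ‖u‖ := by
  have key : ‖Wact W u‖^2 ≤ (η * ‖u‖)^2 := by
    rw [stack_norm_sq]
    have h1 : ∀ i, ‖Wact W u i‖^2 = ∑ s, (∑ k, W i k * u k s)^2 := by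
      intro i
      rw [vec_norm_sq]
      congr 1; funext s
      congr 1
      show (∑ k, W i k • u k) s = _
      rw [WithLp.ofLp_sum, Finset.sum_apply]; rfl
    calc ∑ i, ‖Wact W u i‖^2 = ∑ s, ∑ i, (∑ k, W i k * u k s)^2 := by
          simp_rw [h1]; rw [Finset.sum_comm]
      _ ≤ ∑ s : Fin d, (η^2 * ∑ k, (u k s)^2) := by
          refine Finset.sum_le_sum fun s _ => ?_
          have hz : ∑ k, (fun k => u k s) k = 0 := by
            have := congrArg (fun z : Vec d => z s) hu
            simp only [WithLp.ofLp_sum, Finset.sum_apply] at this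
            simpa using this
          set us : Vec m := WithLp.toLp 2 (fun k => u k s) with hus
          have hc := hWcontract us hz
          have hsq := pow_le_pow_left₀ (norm_nonneg _) hc 2
          rw [mul_pow] at hsq
          calc ∑ i, (∑ k, W i k * u k s)^2 = ‖mulVecE W us‖^2 := by
                rw [vec_norm_sq]; rfl
            _ ≤ η^2 * ‖us‖^2 := hsq
            _ = η^2 * ∑ k, (u k s)^2 := by rw [vec_norm_sq]
      _ = (η * ‖u‖)^2 := by
          rw [← Finset.mul_sum, mul_pow]
          congr 1
          rw [stack_norm_sq]
          simp_rw [vec_norm_sq]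
          rw [Finset.sum_comm]
  have h2 : 0 ≤ η * ‖u‖ := mul_nonneg hη0 (norm_nonneg _)
  exact (pow_le_pow_iff_left₀ (norm_nonneg _) h2 (by norm_num)).mp key

lemma norm_decomp (hm : 0 < m) (u : Stack m d) :
    ‖u‖^2 = ‖u - oneVec (blockAvg u)‖^2 + m * ‖blockAvg u‖^2 := by
  set c := blockAvg u with hc
  have hsum : ∑ i, u i = (m : ℝ) • c := by
    rw [hc]
    unfold blockAvg
    rw [smul_smul, mul_inv_cancel₀ (by positivity : (m:ℝ) ≠ 0), one_smul]
  have horth : ⟪u - oneVec c, oneVec c⟫ = 0 := by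
    rw [PiLp.inner_apply]
    simp only [PiLp.sub_apply]
    have honeap : ∀ i : Fin m, (oneVec c : Stack m d) i = c := fun _ => rfl
    simp_rw [honeap]
    rw [← sum_inner]
    have h : ∑ i, (u i - c) = 0 := by
      rw [Finset.sum_sub_distrib, hsum, Finset.sum_const, Finset.card_univ,
        Nat.cast_smul_eq_nsmul]
      simp
    rw [h, inner_zero_left]
  have hone : ‖(oneVec c : Stack m d)‖^2 = m * ‖c‖^2 := by
    rw [stack_norm_sq]
    simp [oneVec, Finset.card_univ]
  calc ‖u‖^2 = ‖(u - oneVec c) + oneVec c‖^2 := by rw [sub_add_cancel]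
    _ = ‖u - oneVec c‖^2 + 2 * ⟪u - oneVec c, oneVec c⟫ + ‖oneVec c‖^2 := norm_add_sq_real _ _
    _ = ‖u - oneVec c‖^2 + m * ‖c‖^2 := by rw [horth, hone]; ring

lemma variance_le {E : Type*} [NormedAddCommGroup E] [InnerProductSpace ℝ E] {n : ℕ}
    (g : Fin n → E) :
    ∑ j, ‖g j - (n:ℝ)⁻¹ • ∑ k, g k‖^2 ≤ ∑ j, ‖g j‖^2 := by
  rcases Nat.eq_zero_or_pos n with h | h
  · subst h; simp
  set c := (n:ℝ)⁻¹ • ∑ k, g k with hc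
  have hsum : ∑ k, g k = (n : ℝ) • c := by
    rw [hc, smul_smul, mul_inv_cancel₀ (by positivity : (n:ℝ) ≠ 0), one_smul]
  have h6 : ∑ j, ‖g j - c‖^2 = ∑ j, ‖g j‖^2 - (n:ℝ) * ‖c‖^2 := by
    have expand : ∀ j, ‖g j - c‖^2 = ‖g j‖^2 - 2 * ⟪g j, c⟫ + ‖c‖^2 := fun j =>
      norm_sub_sq_real _ _
    simp_rw [expand]
    rw [Finset.sum_add_distrib, Finset.sum_sub_distrib]
    have h2 : ∑ x : Fin n, 2 * ⟪g x, c⟫ = 2 * ((n:ℝ) * ‖c‖^2) := by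
      rw [← Finset.mul_sum, ← sum_inner, hsum, real_inner_smul_left, real_inner_self_eq_norm_sq]
    have h3 : ∑ _x : Fin n, ‖c‖^2 = (n:ℝ) * ‖c‖^2 := by
      rw [Finset.sum_const, Finset.card_univ]; simp [nsmul_eq_mul]
    rw [h2, h3]; ring
  rw [h6]
  nlinarith [sq_nonneg ‖c‖, Nat.cast_nonneg (α := ℝ) n]

lemma grad_avg {d n : ℕ} (f : Fin n → Vec d → ℝ) (hdiff : ∀ j, Differentiable ℝ (f j))
    (w : Vec d) :
    gradient (fun w => (n : ℝ)⁻¹ * ∑ j, f j w) w = (n : ℝ)⁻¹ • ∑ j, gradient (f j) w := by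
  unfold gradient
  have h1 : fderiv ℝ (fun w => (n : ℝ)⁻¹ * ∑ j, f j w) w
      = (n : ℝ)⁻¹ • fderiv ℝ (fun w => ∑ j, f j w) w := by
    rw [fderiv_const_mul (by exact (Differentiable.fun_sum (fun j _ => hdiff j)).differentiableAt)]
  have h2 : fderiv ℝ (fun w => ∑ j, f j w) w = ∑ j, fderiv ℝ (f j) w :=
    fderiv_fun_sum (fun j _ => (hdiff j).differentiableAt)
  rw [h1, h2, _root_.map_smul, _root_.map_sum]

end Det
set_option maxHeartbeats 4000000 in
/-- Lemma 1, part 1: bound on the global gradient-tracking variance over the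
current inner loop.  Here `n_r = ⌊r/q⌋ + 1`, so `(n_r − 1)q = (r/q)·q`, and every iteration
`r` satisfies `(n_r − 1)q ≤ r ≤ n_r q − 1`. -/
theorem stmt8
    (m d n q S2 : ℕ) (hm : 0 < m) (hn : 0 < n) (hq : 1 ≤ q) (hS2 : 0 < S2)
    (L η α : ℝ) (hL : 0 ≤ L) (hη0 : 0 ≤ η) (hη1 : η < 1) (hα : 0 < α)
    (f : Fin m → Fin n → Vec d → ℝ)
    (hdiff : ∀ i j, Differentiable ℝ (f i j))
    (hlip : ∀ i j (u u' : Vec d),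
      ‖gradient (f i j) u - gradient (f i j) u'‖ ≤ L * ‖u - u'‖)
    (W : Matrix (Fin m) (Fin m) ℝ) (hWsymm : W.IsSymm)
    (hW1 : W.mulVec (fun _ => (1 : ℝ)) = fun _ => (1 : ℝ))
    (hWcontract : ∀ u : Vec m, (∑ k, u k) = 0 → ‖mulVecE W u‖ ≤ η * ‖u‖)
    (Ω : Type) [MeasurableSpace Ω] (μ : Measure Ω) [IsProbabilityMeasure μ]
    (J : ℕ → Fin S2 → Fin m → Ω → Fin n)
    (hJmeas : ∀ r b i, Measurable (J r b i))
    (hJunif : ∀ r b i j, μ {ω | J r b i ω = j} = (n : ENNReal)⁻¹)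
    (hJindep : iIndepFun
      (fun p : ℕ × Fin S2 × Fin m => J p.1 p.2.1 p.2.2) μ)
    (x0 : Stack m d) (x v y : ℕ → Ω → Stack m d)
    (hx0 : ∀ ω, x 0 ω = x0)
    (hy0 : ∀ ω, y 0 ω = v 0 ω)
    (hxrec : ∀ r ω, x (r + 1) ω = Wact W (x r ω) - α • y r ω)
    (hvfull : ∀ r, q ∣ r → ∀ ω, v r ω = Gmap f (x r ω))
    (hvest : ∀ r, ¬ q ∣ (r + 1) → ∀ ω i, v (r + 1) ω i =
      (S2 : ℝ)⁻¹ • ∑ b, (gradient (f i (J (r + 1) b i ω)) (x (r + 1) ω i)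
        - gradient (f i (J (r + 1) b i ω)) (x r ω i)) + v r ω i)
    (hyrec : ∀ r ω, y (r + 1) ω = Wact W (y r ω) + v (r + 1) ω - v r ω)
    :
    ∀ r : ℕ,
      (∫ ω, ‖blockAvg (y r ω) - avgGrad f (x r ω)‖ ^ 2 ∂μ) ≤
        8 * L ^ 2 / ((m : ℝ) * S2) *
            ∑ t ∈ Finset.Icc (r / q * q) r, ∫ ω, ‖x t ω - oneVec (blockAvg (x t ω))‖ ^ 2 ∂μ
        + 4 * α ^ 2 * L ^ 2 / ((m : ℝ) * S2) *
            ∑ t ∈ Finset.Icc (r / q * q) r, ∫ ω, ‖y t ω - oneVec (blockAvg (y t ω))‖ ^ 2 ∂μ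
        + 4 * α ^ 2 * L ^ 2 / (S2 : ℝ) *
            ∑ t ∈ Finset.Icc (r / q * q) r, ∫ ω, ‖blockAvg (y t ω)‖ ^ 2 ∂μ
        + ∫ ω, ‖blockAvg (y (r / q * q) ω) - avgGrad f (x (r / q * q) ω)‖ ^ 2 ∂μ := by
  classical
  have hmR : (1:ℝ) ≤ m := by exact_mod_cast hm
  have hSR : (1:ℝ) ≤ S2 := by exact_mod_cast hS2
  have hm0 : ((m:ℝ)) ≠ 0 := by positivity
  have hS0 : ((S2:ℝ)) ≠ 0 := by positivity
  have hn0 : ((n:ℝ)) ≠ 0 := by positivity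
  let Jf : ℕ × Fin S2 × Fin m → Ω → Fin n := fun p => J p.1 p.2.1 p.2.2
  have hJfmeas : ∀ p, Measurable (Jf p) := fun p => hJmeas p.1 p.2.1 p.2.2
  have hJfindep : iIndepFun Jf μ := hJindep
  have hJfunif : ∀ p j, μ {ω | Jf p ω = j} = (n : ENNReal)⁻¹ := fun p j =>
    hJunif p.1 p.2.1 p.2.2 j
  let Tt : ℕ → Finset (ℕ × Fin S2 × Fin m) :=
    fun t => Finset.Iic t ×ˢ (Finset.univ : Finset (Fin S2 × Fin m))
  have hTmono : ∀ {t t' : ℕ}, t ≤ t' → Tt t ⊆ Tt t' := fun {t t'} h =>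
    Finset.product_subset_product (Finset.Iic_subset_Iic.mpr h) (Finset.Subset.refl _)
  have hTmem : ∀ (t : ℕ) (b : Fin S2) (i : Fin m), ((t, b, i) : ℕ × Fin S2 × Fin m) ∈ Tt t :=
    fun t b i => Finset.mem_product.mpr ⟨Finset.mem_Iic.mpr le_rfl, Finset.mem_univ _⟩
  have hTnotmem : ∀ (t t' : ℕ) (b : Fin S2) (i : Fin m), t < t' →
      ((t', b, i) : ℕ × Fin S2 × Fin m) ∉ Tt t := fun t t' b i h hmem =>
    absurd (Finset.mem_Iic.mp (Finset.mem_product.mp hmem).1) (by omega)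
  -- dependence of the processes on the sampling history
  have hrep : ∀ t, DepOn Jf (x t) (Tt t) ∧ DepOn Jf (v t) (Tt t) ∧ DepOn Jf (y t) (Tt t) := by
    intro t
    induction t with
    | zero =>
      have hx' : DepOn Jf (x 0) (Tt 0) := by
        have hxx : x 0 = fun _ => x0 := funext hx0
        rw [hxx]; exact DepOn.const x0
      have hv' : DepOn Jf (v 0) (Tt 0) := by
        have hvv : v 0 = fun _ => Gmap f x0 := funext fun ω => by
          rw [hvfull 0 (dvd_zero q) ω, hx0]
        rw [hvv]; exact DepOn.const _
      have hy' : DepOn Jf (y 0) (Tt 0) := by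
        have hyy : y 0 = v 0 := funext hy0
        rw [hyy]; exact hv'
      exact ⟨hx', hv', hy'⟩
    | succ t ih =>
      obtain ⟨ihx, ihv, ihy⟩ := ih
      have hsub := hTmono (Nat.le_succ t)
      have hx' : DepOn Jf (x (t+1)) (Tt (t+1)) := by
        have hxx : x (t+1) = fun ω => Wact W (x t ω) - α • y t ω := funext (hxrec t)
        rw [hxx]
        exact (ihx.mono hsub).map₂ (fun a b => Wact W a - α • b) (ihy.mono hsub)
      have hv' : DepOn Jf (v (t+1)) (Tt (t+1)) := by
        by_cases hdvd : q ∣ (t+1)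
        · have hvv : v (t+1) = fun ω => Gmap f (x (t+1) ω) := funext (hvfull _ hdvd)
          rw [hvv]; exact hx'.comp (Gmap f)
        · have hJt : DepOn Jf
              (fun ω => (fun bp : Fin S2 × Fin m => Jf (t+1, bp.1, bp.2) ω)) (Tt (t+1)) :=
            DepOn.tuple (fun bp : Fin S2 × Fin m => ((t+1 : ℕ), bp.1, bp.2))
              (fun bp => hTmem (t+1) bp.1 bp.2)
          have hcomb := hx'.pair ((ihx.mono hsub).pair ((ihv.mono hsub).pair hJt))
          have hvv : v (t+1) = fun ω =>
              (fun P : Stack m d × Stack m d × Stack m d × (Fin S2 × Fin m → Fin n) =>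
                (WithLp.toLp 2 (fun i => (S2 : ℝ)⁻¹ • ∑ b, (gradient (f i (P.2.2.2 (b, i))) (P.1 i)
                  - gradient (f i (P.2.2.2 (b, i))) (P.2.1 i)) + P.2.2.1 i) : Stack m d))
              (x (t+1) ω, x t ω, v t ω, fun bp : Fin S2 × Fin m => Jf (t+1, bp.1, bp.2) ω) := by
            funext ω
            refine PiLp.ext fun i => ?_
            show v (t+1) ω i = _
            simp only []
            exact hvest t hdvd ω i
          rw [hvv]
          exact hcomb.comp
            (fun P : Stack m d × Stack m d × Stack m d × (Fin S2 × Fin m → Fin n) =>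
              (WithLp.toLp 2 (fun i => (S2 : ℝ)⁻¹ • ∑ b, (gradient (f i (P.2.2.2 (b, i))) (P.1 i)
                - gradient (f i (P.2.2.2 (b, i))) (P.2.1 i)) + P.2.2.1 i) : Stack m d))
      have hy' : DepOn Jf (y (t+1)) (Tt (t+1)) := by
        have hyy : y (t+1) = fun ω => Wact W (y t ω) + v (t+1) ω - v t ω := funext (hyrec t)
        rw [hyy]
        exact ((ihy.mono hsub).pair (hv'.pair (ihv.mono hsub))).comp
          (fun P => Wact W P.1 + P.2.1 - P.2.2)
      exact ⟨hx', hv', hy'⟩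
  have hgradLoc : ∀ (i : Fin m) (w : Vec d),
      gradient (fLoc f i) w = (n:ℝ)⁻¹ • ∑ j, gradient (f i j) w := fun i w =>
    grad_avg (f i) (hdiff i) w
  have hintegr : ∀ (T : Finset (ℕ × Fin S2 × Fin m)) (g : Ω → ℝ),
      DepOn Jf g T → Integrable g μ := fun T g h => h.integrable μ hn hJfmeas
  -- the strengthened induction
  have key : ∀ r : ℕ,
      (∫ ω, ‖blockAvg (y r ω) - avgGrad f (x r ω)‖ ^ 2 ∂μ) ≤
        8 * L ^ 2 / ((m : ℝ) * S2) *
            ∑ t ∈ Finset.Ico (r / q * q) r, ∫ ω, ‖x t ω - oneVec (blockAvg (x t ω))‖ ^ 2 ∂μ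
        + 4 * α ^ 2 * L ^ 2 / ((m : ℝ) * S2) *
            ∑ t ∈ Finset.Ico (r / q * q) r, ∫ ω, ‖y t ω - oneVec (blockAvg (y t ω))‖ ^ 2 ∂μ
        + 4 * α ^ 2 * L ^ 2 / (S2 : ℝ) *
            ∑ t ∈ Finset.Ico (r / q * q) r, ∫ ω, ‖blockAvg (y t ω)‖ ^ 2 ∂μ
        + ∫ ω, ‖blockAvg (y (r / q * q) ω) - avgGrad f (x (r / q * q) ω)‖ ^ 2 ∂μ := by
    intro r
    induction r with
    | zero =>
      simp
    | succ r ih =>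
      by_cases hdvd : q ∣ (r + 1)
      · have hs : (r + 1) / q * q = r + 1 := Nat.div_mul_cancel hdvd
        rw [hs, Finset.Ico_self]
        simp
      · have hq' : (r + 1) / q = r / q := by
          rw [Nat.succ_div, if_neg hdvd, add_zero]
        rw [hq']
        have hsle : r / q * q ≤ r := Nat.div_mul_le_self r q
        -- local objects
        let Dif : Fin m → Fin n → Vec d → Vec d → Vec d :=
          fun i j a a' => (gradient (f i j) a - gradient (f i j) a')
            - (gradient (fLoc f i) a - gradient (fLoc f i) a')
        let ζ : Fin S2 × Fin m → Ω → Vec d :=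
          fun p ω => Dif p.2 (Jf (r+1, p.1, p.2) ω) (x (r+1) ω p.2) (x r ω p.2)
        let ebar : Ω → Vec d := fun ω => ((m:ℝ)⁻¹ * (S2:ℝ)⁻¹) • ∑ p : Fin S2 × Fin m, ζ p ω
        have hDsum : ∀ (i : Fin m) (a a' : Vec d), ∑ j, Dif i j a a' = 0 := by
          intro i a a'
          show ∑ j, ((gradient (f i j) a - gradient (f i j) a')
            - (gradient (fLoc f i) a - gradient (fLoc f i) a')) = 0
          have hsplit : ∑ j, ((gradient (f i j) a - gradient (f i j) a')
              - (gradient (fLoc f i) a - gradient (fLoc f i) a'))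
              = (∑ j, (gradient (f i j) a - gradient (f i j) a'))
                - (n : ℝ) • (gradient (fLoc f i) a - gradient (fLoc f i) a') := by
            rw [Finset.sum_sub_distrib, Finset.sum_const, Finset.card_univ, Fintype.card_fin,
              Nat.cast_smul_eq_nsmul]
          rw [hsplit, hgradLoc, hgradLoc, ← smul_sub, smul_smul, mul_inv_cancel₀ hn0, one_smul,
            Finset.sum_sub_distrib, sub_self]
        have hvar : ∀ (i : Fin m) (a a' : Vec d),
            (n:ℝ)⁻¹ * ∑ j, ‖Dif i j a a'‖^2 ≤ L^2 * ‖a - a'‖^2 := by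
          intro i a a'
          have hident : ∀ j, Dif i j a a'
              = (gradient (f i j) a - gradient (f i j) a')
                - (n:ℝ)⁻¹ • ∑ k, (gradient (f i k) a - gradient (f i k) a') := by
            intro j
            show (gradient (f i j) a - gradient (f i j) a')
              - (gradient (fLoc f i) a - gradient (fLoc f i) a') = _
            rw [hgradLoc, hgradLoc, ← smul_sub, ← Finset.sum_sub_distrib]
          have h1 : ∑ j, ‖Dif i j a a'‖^2 ≤ ∑ j : Fin n, (L * ‖a - a'‖)^2 := by
            calc ∑ j, ‖Dif i j a a'‖^2
                = ∑ j, ‖(gradient (f i j) a - gradient (f i j) a')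
                  - (n:ℝ)⁻¹ • ∑ k, (gradient (f i k) a - gradient (f i k) a')‖^2 := by
                  simp_rw [hident]
              _ ≤ ∑ j, ‖gradient (f i j) a - gradient (f i j) a'‖^2 :=
                  variance_le (fun j => gradient (f i j) a - gradient (f i j) a')
              _ ≤ ∑ j : Fin n, (L * ‖a - a'‖)^2 :=
                  Finset.sum_le_sum fun j _ =>
                    pow_le_pow_left₀ (norm_nonneg _) (hlip i j a a') 2
          rw [Finset.sum_const, Finset.card_univ, Fintype.card_fin, nsmul_eq_mul] at h1
          calc (n:ℝ)⁻¹ * ∑ j, ‖Dif i j a a'‖^2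
              ≤ (n:ℝ)⁻¹ * ((n:ℝ) * (L * ‖a - a'‖)^2) :=
                mul_le_mul_of_nonneg_left h1 (by positivity)
            _ = (L * ‖a - a'‖)^2 := by field_simp
            _ = L^2 * ‖a - a'‖^2 := by ring
        -- dependence facts
        have hxdep' : DepOn Jf (x (r+1)) (Tt r) := by
          have hxx : x (r+1) = fun ω => Wact W (x r ω) - α • y r ω := funext (hxrec r)
          rw [hxx]
          exact ((hrep r).1).map₂ (fun a b => Wact W a - α • b) ((hrep r).2.2)
        have herrdep : DepOn Jf (fun ω => blockAvg (y r ω) - avgGrad f (x r ω)) (Tt r) :=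
          (((hrep r).2.2).pair ((hrep r).1)).comp (fun P => blockAvg P.1 - avgGrad f P.2)
        have hζdepT : ∀ p : Fin S2 × Fin m,
            DepOn Jf (ζ p) (insert ((r+1 : ℕ), p.1, p.2) (Tt r)) := by
          intro p
          have hsub1 : Tt r ⊆ insert ((r+1:ℕ), p.1, p.2) (Tt r) := Finset.subset_insert _ _
          exact ((DepOn.apply (Finset.mem_insert_self _ _)).pair
            ((hxdep'.mono hsub1).pair (((hrep r).1).mono hsub1))).comp
            (fun P => Dif p.2 P.1 (P.2.1 p.2) (P.2.2 p.2))
        have hinsS : ∀ p : Fin S2 × Fin m, insert ((r+1:ℕ), p.1, p.2) (Tt r) ⊆ Tt (r+1) := by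
          intro p a ha
          rcases Finset.mem_insert.mp ha with h | h
          · subst h; exact hTmem (r+1) p.1 p.2
          · exact hTmono (Nat.le_succ r) h
        have hζdep' : ∀ p, DepOn Jf (ζ p) (Tt (r+1)) := fun p => (hζdepT p).mono (hinsS p)
        have herrdepS : DepOn Jf (fun ω => blockAvg (y r ω) - avgGrad f (x r ω)) (Tt (r+1)) :=
          herrdep.mono (hTmono (Nat.le_succ r))
        have hebardep : DepOn Jf ebar (Tt (r+1)) :=
          (DepOn.fintypePi hζdep').comp
            (fun c : Fin S2 × Fin m → Vec d => ((m:ℝ)⁻¹ * (S2:ℝ)⁻¹) • ∑ p, c p)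
        -- pointwise error decomposition
        have hZi : ∀ ω (i : Fin m),
            (v (r+1) ω i - v r ω i)
              - (gradient (fLoc f i) (x (r+1) ω i) - gradient (fLoc f i) (x r ω i))
            = (S2:ℝ)⁻¹ • ∑ b, ζ (b, i) ω := by
          intro ω i
          have hv2 : v (r+1) ω i - v r ω i
              = (S2:ℝ)⁻¹ • ∑ b, (gradient (f i (J (r+1) b i ω)) (x (r+1) ω i)
                - gradient (f i (J (r+1) b i ω)) (x r ω i)) := by
            rw [hvest r hdvd ω i]; abel
          rw [hv2]
          show _ = (S2:ℝ)⁻¹ • ∑ b, ((gradient (f i (J (r+1) b i ω)) (x (r+1) ω i)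
                - gradient (f i (J (r+1) b i ω)) (x r ω i))
              - (gradient (fLoc f i) (x (r+1) ω i) - gradient (fLoc f i) (x r ω i)))
          conv_rhs => rw [Finset.sum_sub_distrib, Finset.sum_const, Finset.card_univ,
            Fintype.card_fin, ← Nat.cast_smul_eq_nsmul ℝ, smul_sub, smul_smul,
            inv_mul_cancel₀ hS0, one_smul]
        have herr : ∀ ω, blockAvg (y (r+1) ω) - avgGrad f (x (r+1) ω)
            = (blockAvg (y r ω) - avgGrad f (x r ω)) + ebar ω := by
          intro ω
          have h1 : blockAvg (y (r+1) ω)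
              = blockAvg (y r ω) + blockAvg (v (r+1) ω) - blockAvg (v r ω) := by
            rw [hyrec r ω, blockAvg_sub, blockAvg_add, blockAvg_Wact W hWsymm hW1]
          have h2 : ebar ω = (m:ℝ)⁻¹ • ∑ i, ((v (r+1) ω i - v r ω i)
              - (gradient (fLoc f i) (x (r+1) ω i) - gradient (fLoc f i) (x r ω i))) := by
            show ((m:ℝ)⁻¹ * (S2:ℝ)⁻¹) • ∑ p : Fin S2 × Fin m, ζ p ω = _
            simp_rw [hZi ω]
            rw [← Finset.smul_sum, smul_smul]
            congr 1
            rw [Fintype.sum_prod_type]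
            exact Finset.sum_comm
          have h3 : (m:ℝ)⁻¹ • ∑ i, ((v (r+1) ω i - v r ω i)
              - (gradient (fLoc f i) (x (r+1) ω i) - gradient (fLoc f i) (x r ω i)))
              = (blockAvg (v (r+1) ω) - blockAvg (v r ω))
                - (avgGrad f (x (r+1) ω) - avgGrad f (x r ω)) := by
            simp only [Finset.sum_sub_distrib, smul_sub]
            rfl
          rw [h1, h2, h3]
          abel
        -- expansion of the squared error
        have hIerr : Integrable (fun ω => ‖blockAvg (y r ω) - avgGrad f (x r ω)‖^2) μ :=
          hintegr _ _ (herrdepS.comp (fun z => ‖z‖^2))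
        have hIcrossInt : Integrable
            (fun ω => 2 * ⟪blockAvg (y r ω) - avgGrad f (x r ω), ebar ω⟫) μ :=
          hintegr _ _ ((herrdepS.pair hebardep).comp (fun P => 2 * ⟪P.1, P.2⟫))
        have hIebar : Integrable (fun ω => ‖ebar ω‖^2) μ :=
          hintegr _ _ (hebardep.comp (fun z => ‖z‖^2))
        have hexp : ∫ ω, ‖blockAvg (y (r+1) ω) - avgGrad f (x (r+1) ω)‖^2 ∂μ
            = (∫ ω, ‖blockAvg (y r ω) - avgGrad f (x r ω)‖^2 ∂μ)
              + ((∫ ω, 2 * ⟪blockAvg (y r ω) - avgGrad f (x r ω), ebar ω⟫ ∂μ)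
                + ∫ ω, ‖ebar ω‖^2 ∂μ) := by
          have hpt : ∀ ω, ‖blockAvg (y (r+1) ω) - avgGrad f (x (r+1) ω)‖^2
              = ‖blockAvg (y r ω) - avgGrad f (x r ω)‖^2
                + (2 * ⟪blockAvg (y r ω) - avgGrad f (x r ω), ebar ω⟫ + ‖ebar ω‖^2) := by
            intro ω
            rw [herr ω, norm_add_sq_real]
            ring
          have hBC : Integrable (fun ω => 2 * ⟪blockAvg (y r ω) - avgGrad f (x r ω), ebar ω⟫
              + ‖ebar ω‖^2) μ := hIcrossInt.add hIebar
          rw [integral_congr_ae (ae_of_all _ hpt), integral_add hIerr hBC,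
            integral_add hIcrossInt hIebar]
        -- the cross term vanishes
        have hcross : ∫ ω, ⟪blockAvg (y r ω) - avgGrad f (x r ω), ebar ω⟫ ∂μ = 0 := by
          have hptsum : ∀ ω, ⟪blockAvg (y r ω) - avgGrad f (x r ω), ebar ω⟫
              = ∑ p : Fin S2 × Fin m,
                  ((m:ℝ)⁻¹ * (S2:ℝ)⁻¹) * ⟪blockAvg (y r ω) - avgGrad f (x r ω), ζ p ω⟫ := by
            intro ω
            show ⟪_, ((m:ℝ)⁻¹ * (S2:ℝ)⁻¹) • ∑ p : Fin S2 × Fin m, ζ p ω⟫ = _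
            rw [real_inner_smul_right, inner_sum, Finset.mul_sum]
          rw [integral_congr_ae (ae_of_all _ hptsum),
            integral_finset_sum _ (fun p _ => hintegr _ _
              (((herrdepS.pair (hζdep' p)).comp
                (fun P => ((m:ℝ)⁻¹ * (S2:ℝ)⁻¹) * ⟪P.1, P.2⟫))))]
          refine Finset.sum_eq_zero fun p _ => ?_
          rw [integral_const_mul]
          have hdepg : ∀ j : Fin n, DepOn Jf
              (fun ω => ⟪blockAvg (y r ω) - avgGrad f (x r ω),
                Dif p.2 j (x (r+1) ω p.2) (x r ω p.2)⟫) (Tt r) := fun j =>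
            (herrdep.pair (hxdep'.pair ((hrep r).1))).comp
              (fun P => ⟪P.1, Dif p.2 j (P.2.1 p.2) (P.2.2 p.2)⟫)
          have hk : ∫ ω, ⟪blockAvg (y r ω) - avgGrad f (x r ω), ζ p ω⟫ ∂μ
              = (n:ℝ)⁻¹ * ∑ j, ∫ ω, ⟪blockAvg (y r ω) - avgGrad f (x r ω),
                  Dif p.2 j (x (r+1) ω p.2) (x r ω p.2)⟫ ∂μ :=
            keyint μ hn Jf hJfmeas hJfunif hJfindep ((r+1 : ℕ), p.1, p.2) (Tt r)
              (hTnotmem r (r+1) p.1 p.2 (Nat.lt_succ_self r)) _ hdepg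
          rw [hk, ← integral_finset_sum _ (fun j _ => hintegr _ _ (hdepg j))]
          have hz : ∀ ω, (∑ j, ⟪blockAvg (y r ω) - avgGrad f (x r ω),
              Dif p.2 j (x (r+1) ω p.2) (x r ω p.2)⟫) = 0 := by
            intro ω
            rw [← inner_sum, hDsum, inner_zero_right]
          rw [integral_congr_ae (ae_of_all _ hz), integral_zero, mul_zero, mul_zero]
        -- diagonal variance bound
        have hdiag : ∀ p : Fin S2 × Fin m, ∫ ω, ⟪ζ p ω, ζ p ω⟫ ∂μ
            ≤ L^2 * ∫ ω, ‖x (r+1) ω p.2 - x r ω p.2‖^2 ∂μ := by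
          intro p
          have hdepg : ∀ j : Fin n, DepOn Jf
              (fun ω => ‖Dif p.2 j (x (r+1) ω p.2) (x r ω p.2)‖^2) (Tt r) := fun j =>
            (hxdep'.pair ((hrep r).1)).comp (fun P => ‖Dif p.2 j (P.1 p.2) (P.2 p.2)‖^2)
          have hptself : ∀ ω, ⟪ζ p ω, ζ p ω⟫
              = ‖Dif p.2 (Jf ((r+1:ℕ), p.1, p.2) ω) (x (r+1) ω p.2) (x r ω p.2)‖^2 := by
            intro ω
            rw [real_inner_self_eq_norm_sq]
          rw [integral_congr_ae (ae_of_all _ hptself)]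
          have hk : ∫ ω, ‖Dif p.2 (Jf ((r+1:ℕ), p.1, p.2) ω) (x (r+1) ω p.2) (x r ω p.2)‖^2 ∂μ
              = (n:ℝ)⁻¹ * ∑ j, ∫ ω, ‖Dif p.2 j (x (r+1) ω p.2) (x r ω p.2)‖^2 ∂μ :=
            keyint μ hn Jf hJfmeas hJfunif hJfindep ((r+1:ℕ), p.1, p.2) (Tt r)
              (hTnotmem r (r+1) p.1 p.2 (Nat.lt_succ_self r)) _ hdepg
          rw [hk, ← integral_finset_sum _ (fun j _ => hintegr _ _ (hdepg j)),
            ← integral_const_mul]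
          have hRint : Integrable (fun ω => L^2 * ‖x (r+1) ω p.2 - x r ω p.2‖^2) μ :=
            hintegr _ _ ((hxdep'.pair ((hrep r).1)).comp
              (fun P => L^2 * ‖P.1 p.2 - P.2 p.2‖^2))
          have hLint : Integrable
              (fun ω => (n:ℝ)⁻¹ * ∑ j, ‖Dif p.2 j (x (r+1) ω p.2) (x r ω p.2)‖^2) μ :=
            hintegr _ _ (((hxdep'.pair ((hrep r).1)).comp
              (fun P => (n:ℝ)⁻¹ * ∑ j, ‖Dif p.2 j (P.1 p.2) (P.2 p.2)‖^2)))
          calc ∫ ω, (n:ℝ)⁻¹ * ∑ j, ‖Dif p.2 j (x (r+1) ω p.2) (x r ω p.2)‖^2 ∂μ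
              ≤ ∫ ω, L^2 * ‖x (r+1) ω p.2 - x r ω p.2‖^2 ∂μ :=
                integral_mono hLint hRint (fun ω => hvar p.2 _ _)
            _ = L^2 * ∫ ω, ‖x (r+1) ω p.2 - x r ω p.2‖^2 ∂μ := integral_const_mul _ _
        -- off-diagonal terms vanish
        have hoff : ∀ p p' : Fin S2 × Fin m, p ≠ p' → ∫ ω, ⟪ζ p ω, ζ p' ω⟫ ∂μ = 0 := by
          intro p p' hne
          have hp₀ : ((r+1:ℕ), p'.1, p'.2) ∉ insert ((r+1:ℕ), p.1, p.2) (Tt r) := by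
            intro hmem
            rcases Finset.mem_insert.mp hmem with h | h
            · exfalso
              apply hne
              have h2 : (p'.1, p'.2) = (p.1, p.2) := congrArg Prod.snd h
              have h3 : p' = p := by
                calc p' = (p'.1, p'.2) := rfl
                  _ = (p.1, p.2) := h2
                  _ = p := rfl
              exact h3.symm
            · exact hTnotmem r (r+1) p'.1 p'.2 (Nat.lt_succ_self r) h
          have hsub1 : Tt r ⊆ insert ((r+1:ℕ), p.1, p.2) (Tt r) := Finset.subset_insert _ _
          have hdepg : ∀ j : Fin n, DepOn Jf
              (fun ω => ⟪ζ p ω, Dif p'.2 j (x (r+1) ω p'.2) (x r ω p'.2)⟫)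
              (insert ((r+1:ℕ), p.1, p.2) (Tt r)) := fun j =>
            ((hζdepT p).pair ((hxdep'.mono hsub1).pair (((hrep r).1).mono hsub1))).comp
              (fun P => ⟪P.1, Dif p'.2 j (P.2.1 p'.2) (P.2.2 p'.2)⟫)
          have hk : ∫ ω, ⟪ζ p ω, ζ p' ω⟫ ∂μ
              = (n:ℝ)⁻¹ * ∑ j, ∫ ω, ⟪ζ p ω, Dif p'.2 j (x (r+1) ω p'.2) (x r ω p'.2)⟫ ∂μ :=
            keyint μ hn Jf hJfmeas hJfunif hJfindep ((r+1:ℕ), p'.1, p'.2) _ hp₀ _ hdepg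
          rw [hk, ← integral_finset_sum _ (fun j _ => hintegr _ _ (hdepg j))]
          have hz : ∀ ω, (∑ j, ⟪ζ p ω, Dif p'.2 j (x (r+1) ω p'.2) (x r ω p'.2)⟫) = 0 := by
            intro ω
            rw [← inner_sum, hDsum, inner_zero_right]
          rw [integral_congr_ae (ae_of_all _ hz), integral_zero, mul_zero]
        -- the double-sum expansion of ‖ebar‖²
        have hebarsq : ∀ ω, ‖ebar ω‖^2
            = ∑ p : Fin S2 × Fin m, ∑ p' : Fin S2 × Fin m,
                ((m:ℝ)⁻¹ * (S2:ℝ)⁻¹)^2 * ⟪ζ p ω, ζ p' ω⟫ := by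
          intro ω
          show ‖((m:ℝ)⁻¹ * (S2:ℝ)⁻¹) • ∑ p : Fin S2 × Fin m, ζ p ω‖^2 = _
          rw [norm_smul, mul_pow, Real.norm_eq_abs, sq_abs,
            ← real_inner_self_eq_norm_sq, sum_inner, Finset.mul_sum]
          refine Finset.sum_congr rfl fun p _ => ?_
          rw [inner_sum, Finset.mul_sum]
        have hip : ∀ p p' : Fin S2 × Fin m, Integrable (fun ω =>
            ((m:ℝ)⁻¹ * (S2:ℝ)⁻¹)^2 * ⟪ζ p ω, ζ p' ω⟫) μ := fun p p' =>
          hintegr _ _ (((hζdep' p).pair (hζdep' p')).comp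
            (fun P => ((m:ℝ)⁻¹ * (S2:ℝ)⁻¹)^2 * ⟪P.1, P.2⟫))
        have hIdouble : ∫ ω, ‖ebar ω‖^2 ∂μ
            = ∑ p : Fin S2 × Fin m, ∑ p' : Fin S2 × Fin m,
                ((m:ℝ)⁻¹ * (S2:ℝ)⁻¹)^2 * ∫ ω, ⟪ζ p ω, ζ p' ω⟫ ∂μ := by
          rw [integral_congr_ae (ae_of_all _ hebarsq),
            integral_finset_sum _ (fun p _ => integrable_finset_sum _ (fun p' _ => hip p p'))]
          refine Finset.sum_congr rfl fun p _ => ?_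
          rw [integral_finset_sum _ (fun p' _ => hip p p')]
          exact Finset.sum_congr rfl fun p' _ => integral_const_mul _ _
        -- collapse to the diagonal
        have hsummand : ∑ i : Fin m, L^2 * ∫ ω, ‖x (r+1) ω i - x r ω i‖^2 ∂μ
            = L^2 * ∫ ω, ‖x (r+1) ω - x r ω‖^2 ∂μ := by
          rw [← Finset.mul_sum]
          congr 1
          rw [← integral_finset_sum _ (fun i _ => hintegr _ _
            ((hxdep'.pair ((hrep r).1)).comp (fun P => ‖P.1 i - P.2 i‖^2)))]
          refine integral_congr_ae (ae_of_all _ fun ω => ?_)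
          show ∑ i, ‖x (r+1) ω i - x r ω i‖^2 = ‖x (r+1) ω - x r ω‖^2
          rw [stack_norm_sq]
          simp [PiLp.sub_apply]
        have hIebar2 : ∫ ω, ‖ebar ω‖^2 ∂μ
            ≤ ((m:ℝ)⁻¹ * (S2:ℝ)⁻¹)^2 * ((S2:ℝ) * (L^2 * ∫ ω, ‖x (r+1) ω - x r ω‖^2 ∂μ)) := by
          rw [hIdouble]
          have hsingle : ∀ p : Fin S2 × Fin m,
              ∑ p' : Fin S2 × Fin m, ((m:ℝ)⁻¹ * (S2:ℝ)⁻¹)^2 * ∫ ω, ⟪ζ p ω, ζ p' ω⟫ ∂μ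
              = ((m:ℝ)⁻¹ * (S2:ℝ)⁻¹)^2 * ∫ ω, ⟪ζ p ω, ζ p ω⟫ ∂μ := by
            intro p
            rw [Finset.sum_eq_single p]
            · intro p' _ hne
              rw [hoff p p' (Ne.symm hne), mul_zero]
            · intro h; exact absurd (Finset.mem_univ p) h
          simp_rw [hsingle]
          have hb : ∑ p : Fin S2 × Fin m, ((m:ℝ)⁻¹*(S2:ℝ)⁻¹)^2 * ∫ ω, ⟪ζ p ω, ζ p ω⟫ ∂μ
              ≤ ∑ p : Fin S2 × Fin m, ((m:ℝ)⁻¹*(S2:ℝ)⁻¹)^2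
                  * (L^2 * ∫ ω, ‖x (r+1) ω p.2 - x r ω p.2‖^2 ∂μ) :=
            Finset.sum_le_sum fun p _ => mul_le_mul_of_nonneg_left (hdiag p) (by positivity)
          refine le_trans hb (le_of_eq ?_)
          rw [← Finset.mul_sum]
          congr 1
          rw [Fintype.sum_prod_type]
          simp_rw [hsummand]
          rw [Finset.sum_const, Finset.card_univ, Fintype.card_fin, nsmul_eq_mul]
        -- pathwise bound on the increment
        have hdeltadep : DepOn Jf (fun ω => ‖x (r+1) ω - x r ω‖^2) (Tt r) :=
          (hxdep'.pair ((hrep r).1)).comp (fun P => ‖P.1 - P.2‖^2)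
        have hCpt : ∀ ω, ‖x (r+1) ω - x r ω‖^2
            ≤ 8 * ‖x r ω - oneVec (blockAvg (x r ω))‖^2
              + (2*α^2 * ‖y r ω - oneVec (blockAvg (y r ω))‖^2
                + 2*α^2*(m:ℝ) * ‖blockAvg (y r ω)‖^2) := by
          intro ω
          have hcontr : ‖Wact W (x r ω - oneVec (blockAvg (x r ω)))‖
              ≤ η * ‖x r ω - oneVec (blockAvg (x r ω))‖ := by
            refine Wact_contract hη0 W hWcontract _ ?_
            simp only [PiLp.sub_apply]
            have honeap : ∀ i : Fin m, (oneVec (blockAvg (x r ω)) : Stack m d) i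
                = blockAvg (x r ω) := fun _ => rfl
            simp_rw [honeap]
            rw [Finset.sum_sub_distrib, Finset.sum_const, Finset.card_univ, Fintype.card_fin,
              ← Nat.cast_smul_eq_nsmul ℝ]
            show ∑ i, x r ω i - (m:ℝ) • ((m:ℝ)⁻¹ • ∑ i, x r ω i) = 0
            rw [smul_smul, mul_inv_cancel₀ hm0, one_smul, sub_self]
          have hΔ : x (r+1) ω - x r ω
              = (Wact W (x r ω - oneVec (blockAvg (x r ω)))
                  - (x r ω - oneVec (blockAvg (x r ω)))) - α • y r ω := by
            rw [hxrec r ω]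
            have hadd := Wact_add W (x r ω - oneVec (blockAvg (x r ω)))
              (oneVec (blockAvg (x r ω)))
            rw [sub_add_cancel, Wact_oneVec W hW1] at hadd
            rw [hadd]
            abel
          have hn1 : ‖x (r+1) ω - x r ω‖
              ≤ 2*‖x r ω - oneVec (blockAvg (x r ω))‖ + α*‖y r ω‖ := by
            rw [hΔ]
            have t1 : ‖(Wact W (x r ω - oneVec (blockAvg (x r ω)))
                - (x r ω - oneVec (blockAvg (x r ω)))) - α • y r ω‖
                ≤ ‖Wact W (x r ω - oneVec (blockAvg (x r ω)))
                - (x r ω - oneVec (blockAvg (x r ω)))‖ + ‖α • y r ω‖ := norm_sub_le _ _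
            have t2 := norm_sub_le (Wact W (x r ω - oneVec (blockAvg (x r ω))))
              (x r ω - oneVec (blockAvg (x r ω)))
            have t3 : ‖α • y r ω‖ = α * ‖y r ω‖ := by
              rw [norm_smul, Real.norm_eq_abs, abs_of_pos hα]
            have t4 : (0:ℝ) ≤ ‖x r ω - oneVec (blockAvg (x r ω))‖ := norm_nonneg _
            nlinarith [hη1.le]
          have hsq : ‖x (r+1) ω - x r ω‖^2
              ≤ 8*‖x r ω - oneVec (blockAvg (x r ω))‖^2 + 2*α^2*‖y r ω‖^2 := by
            nlinarith [norm_nonneg (x (r+1) ω - x r ω), hn1,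
              sq_nonneg (2*‖x r ω - oneVec (blockAvg (x r ω))‖ - α*‖y r ω‖),
              norm_nonneg (x r ω - oneVec (blockAvg (x r ω))), norm_nonneg (y r ω),
              mul_nonneg hα.le (norm_nonneg (y r ω))]
          have hdecy : ‖y r ω‖^2 = ‖y r ω - oneVec (blockAvg (y r ω))‖^2
              + m * ‖blockAvg (y r ω)‖^2 := norm_decomp hm (y r ω)
          rw [hdecy] at hsq
          linarith
        -- integrate the pathwise bound
        have hIx : Integrable (fun ω => ‖x r ω - oneVec (blockAvg (x r ω))‖^2) μ :=
          hintegr _ _ (((hrep r).1).comp (fun z => ‖z - oneVec (blockAvg z)‖^2))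
        have hIy : Integrable (fun ω => ‖y r ω - oneVec (blockAvg (y r ω))‖^2) μ :=
          hintegr _ _ (((hrep r).2.2).comp (fun z => ‖z - oneVec (blockAvg z)‖^2))
        have hIb : Integrable (fun ω => ‖blockAvg (y r ω)‖^2) μ :=
          hintegr _ _ (((hrep r).2.2).comp (fun z => ‖blockAvg z‖^2))
        have hCint : ∫ ω, ‖x (r+1) ω - x r ω‖^2 ∂μ
            ≤ 8 * (∫ ω, ‖x r ω - oneVec (blockAvg (x r ω))‖^2 ∂μ)
              + (2*α^2 * (∫ ω, ‖y r ω - oneVec (blockAvg (y r ω))‖^2 ∂μ)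
                + 2*α^2*(m:ℝ) * ∫ ω, ‖blockAvg (y r ω)‖^2 ∂μ) := by
          have hR1 : Integrable (fun ω => 8*‖x r ω - oneVec (blockAvg (x r ω))‖^2) μ :=
            hIx.const_mul 8
          have hR2 : Integrable (fun ω => 2*α^2*‖y r ω - oneVec (blockAvg (y r ω))‖^2) μ :=
            hIy.const_mul _
          have hR3 : Integrable (fun ω => 2*α^2*(m:ℝ)*‖blockAvg (y r ω)‖^2) μ :=
            hIb.const_mul _
          have hR23 : Integrable (fun ω => 2*α^2*‖y r ω - oneVec (blockAvg (y r ω))‖^2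
              + 2*α^2*(m:ℝ)*‖blockAvg (y r ω)‖^2) μ := hR2.add hR3
          have hR : Integrable (fun ω => 8*‖x r ω - oneVec (blockAvg (x r ω))‖^2
              + (2*α^2*‖y r ω - oneVec (blockAvg (y r ω))‖^2
                + 2*α^2*(m:ℝ)*‖blockAvg (y r ω)‖^2)) μ := hR1.add hR23
          calc ∫ ω, ‖x (r+1) ω - x r ω‖^2 ∂μ
              ≤ ∫ ω, (8*‖x r ω - oneVec (blockAvg (x r ω))‖^2
                + (2*α^2*‖y r ω - oneVec (blockAvg (y r ω))‖^2
                  + 2*α^2*(m:ℝ)*‖blockAvg (y r ω)‖^2)) ∂μ :=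
              integral_mono (hintegr _ _ hdeltadep) hR hCpt
            _ = _ := by
              have e1 : ∫ ω, (8*‖x r ω - oneVec (blockAvg (x r ω))‖^2
                  + (2*α^2*‖y r ω - oneVec (blockAvg (y r ω))‖^2
                    + 2*α^2*(m:ℝ)*‖blockAvg (y r ω)‖^2)) ∂μ
                  = (∫ ω, 8*‖x r ω - oneVec (blockAvg (x r ω))‖^2 ∂μ)
                    + ∫ ω, (2*α^2*‖y r ω - oneVec (blockAvg (y r ω))‖^2
                      + 2*α^2*(m:ℝ)*‖blockAvg (y r ω)‖^2) ∂μ := integral_add hR1 hR23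
              have e2 : ∫ ω, (2*α^2*‖y r ω - oneVec (blockAvg (y r ω))‖^2
                    + 2*α^2*(m:ℝ)*‖blockAvg (y r ω)‖^2) ∂μ
                  = (∫ ω, 2*α^2*‖y r ω - oneVec (blockAvg (y r ω))‖^2 ∂μ)
                    + ∫ ω, 2*α^2*(m:ℝ)*‖blockAvg (y r ω)‖^2 ∂μ := integral_add hR2 hR3
              rw [e1, e2, integral_const_mul, integral_const_mul, integral_const_mul]
        -- coefficient bookkeeping
        have hminv : (m:ℝ)⁻¹ ≤ 1 := inv_le_one_of_one_le₀ hmR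
        have hIx0 : 0 ≤ ∫ ω, ‖x r ω - oneVec (blockAvg (x r ω))‖^2 ∂μ :=
          integral_nonneg fun ω => by positivity
        have hIy0 : 0 ≤ ∫ ω, ‖y r ω - oneVec (blockAvg (y r ω))‖^2 ∂μ :=
          integral_nonneg fun ω => by positivity
        have hIb0 : 0 ≤ ∫ ω, ‖blockAvg (y r ω)‖^2 ∂μ :=
          integral_nonneg fun ω => by positivity
        have hKX : ((m:ℝ)⁻¹ * (S2:ℝ)⁻¹)^2 * (S2:ℝ) * L^2
            = L^2 * (m:ℝ)⁻¹ * (m:ℝ)⁻¹ * (S2:ℝ)⁻¹ := by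
          have hS : (S2:ℝ)⁻¹^2 * (S2:ℝ) = (S2:ℝ)⁻¹ := by
            rw [pow_two, mul_assoc, inv_mul_cancel₀ hS0, mul_one]
          calc ((m:ℝ)⁻¹ * (S2:ℝ)⁻¹)^2 * (S2:ℝ) * L^2
              = ((m:ℝ)⁻¹^2) * ((S2:ℝ)⁻¹^2 * (S2:ℝ)) * L^2 := by ring
            _ = ((m:ℝ)⁻¹^2) * (S2:ℝ)⁻¹ * L^2 := by rw [hS]
            _ = L^2 * (m:ℝ)⁻¹ * (m:ℝ)⁻¹ * (S2:ℝ)⁻¹ := by rw [pow_two]; ring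
        have h8 : (((m:ℝ)⁻¹ * (S2:ℝ)⁻¹)^2 * (S2:ℝ) * L^2) * 8 ≤ 8 * L^2 / ((m:ℝ)*S2) := by
          rw [hKX, div_eq_mul_inv, mul_inv]
          calc L^2 * (m:ℝ)⁻¹ * (m:ℝ)⁻¹ * (S2:ℝ)⁻¹ * 8
              = (m:ℝ)⁻¹ * (8 * L^2 * ((m:ℝ)⁻¹ * (S2:ℝ)⁻¹)) := by ring
            _ ≤ 1 * (8 * L^2 * ((m:ℝ)⁻¹ * (S2:ℝ)⁻¹)) :=
                mul_le_mul_of_nonneg_right hminv (by positivity)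
            _ = 8 * L^2 * ((m:ℝ)⁻¹ * (S2:ℝ)⁻¹) := by ring
        have hB : (((m:ℝ)⁻¹ * (S2:ℝ)⁻¹)^2 * (S2:ℝ) * L^2) * (2*α^2)
            ≤ 4 * α^2 * L^2 / ((m:ℝ)*S2) := by
          rw [hKX, div_eq_mul_inv, mul_inv]
          calc L^2 * (m:ℝ)⁻¹ * (m:ℝ)⁻¹ * (S2:ℝ)⁻¹ * (2*α^2)
              = (m:ℝ)⁻¹ * (2*(α^2*L^2*((m:ℝ)⁻¹*(S2:ℝ)⁻¹))) := by ring
            _ ≤ 1 * (2*(α^2*L^2*((m:ℝ)⁻¹*(S2:ℝ)⁻¹))) :=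
                mul_le_mul_of_nonneg_right hminv (by positivity)
            _ ≤ 4*α^2*L^2*((m:ℝ)⁻¹*(S2:ℝ)⁻¹) := by
                nlinarith [show (0:ℝ) ≤ α^2*L^2*((m:ℝ)⁻¹*(S2:ℝ)⁻¹) by positivity]
        have hC3 : (((m:ℝ)⁻¹ * (S2:ℝ)⁻¹)^2 * (S2:ℝ) * L^2) * (2*α^2*(m:ℝ))
            ≤ 4 * α^2 * L^2 / (S2:ℝ) := by
          rw [hKX, div_eq_mul_inv]
          have hmm : (m:ℝ)⁻¹ * (m:ℝ) = 1 := inv_mul_cancel₀ hm0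
          calc L^2*(m:ℝ)⁻¹*(m:ℝ)⁻¹*(S2:ℝ)⁻¹*(2*α^2*(m:ℝ))
              = ((m:ℝ)⁻¹*(m:ℝ)) * ((m:ℝ)⁻¹ * (2*α^2*L^2*(S2:ℝ)⁻¹)) := by ring
            _ = (m:ℝ)⁻¹ * (2*α^2*L^2*(S2:ℝ)⁻¹) := by rw [hmm, one_mul]
            _ ≤ 1 * (2*α^2*L^2*(S2:ℝ)⁻¹) :=
                mul_le_mul_of_nonneg_right hminv (by positivity)
            _ ≤ 4*α^2*L^2*(S2:ℝ)⁻¹ := by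
                nlinarith [show (0:ℝ) ≤ α^2*L^2*(S2:ℝ)⁻¹ by positivity]
        have hvar2 : ∫ ω, ‖ebar ω‖^2 ∂μ
            ≤ 8 * L ^ 2 / ((m : ℝ) * S2) * (∫ ω, ‖x r ω - oneVec (blockAvg (x r ω))‖ ^ 2 ∂μ)
              + 4 * α ^ 2 * L ^ 2 / ((m : ℝ) * S2)
                  * (∫ ω, ‖y r ω - oneVec (blockAvg (y r ω))‖ ^ 2 ∂μ)
              + 4 * α ^ 2 * L ^ 2 / (S2 : ℝ) * (∫ ω, ‖blockAvg (y r ω)‖ ^ 2 ∂μ) := by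
          have hKX0 : (0:ℝ) ≤ ((m:ℝ)⁻¹ * (S2:ℝ)⁻¹)^2 * (S2:ℝ) * L^2 := by positivity
          have hIeb : ∫ ω, ‖ebar ω‖^2 ∂μ
              ≤ (((m:ℝ)⁻¹ * (S2:ℝ)⁻¹)^2 * (S2:ℝ) * L^2) * ∫ ω, ‖x (r+1) ω - x r ω‖^2 ∂μ :=
            le_trans hIebar2 (le_of_eq (by ring))
          have hstep := mul_le_mul_of_nonneg_left hCint hKX0
          have e1 := mul_le_mul_of_nonneg_right h8 hIx0
          have e2 := mul_le_mul_of_nonneg_right hB hIy0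
          have e3 := mul_le_mul_of_nonneg_right hC3 hIb0
          nlinarith [hIeb, hstep, e1, e2, e3]
        -- assemble the induction step
        have hfinal : ∫ ω, ‖blockAvg (y (r+1) ω) - avgGrad f (x (r+1) ω)‖^2 ∂μ
            ≤ (∫ ω, ‖blockAvg (y r ω) - avgGrad f (x r ω)‖^2 ∂μ)
              + (8 * L ^ 2 / ((m : ℝ) * S2)
                    * (∫ ω, ‖x r ω - oneVec (blockAvg (x r ω))‖ ^ 2 ∂μ)
                + 4 * α ^ 2 * L ^ 2 / ((m : ℝ) * S2)
                    * (∫ ω, ‖y r ω - oneVec (blockAvg (y r ω))‖ ^ 2 ∂μ)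
                + 4 * α ^ 2 * L ^ 2 / (S2 : ℝ) * (∫ ω, ‖blockAvg (y r ω)‖ ^ 2 ∂μ)) := by
          rw [hexp]
          have h2z : ∫ ω, 2 * ⟪blockAvg (y r ω) - avgGrad f (x r ω), ebar ω⟫ ∂μ = 0 := by
            rw [integral_const_mul, hcross, mul_zero]
          rw [h2z]
          linarith [hvar2]
        rw [Finset.sum_Ico_succ_top hsle, Finset.sum_Ico_succ_top hsle,
          Finset.sum_Ico_succ_top hsle, mul_add, mul_add, mul_add]
        linarith [ih, hfinal]

  -- conclude
  intro r
  have hk := key r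
  have hsub : Finset.Ico (r/q*q) r ⊆ Finset.Icc (r/q*q) r := Finset.Ico_subset_Icc_self
  have hmx : ∑ t ∈ Finset.Ico (r/q*q) r, ∫ ω, ‖x t ω - oneVec (blockAvg (x t ω))‖ ^ 2 ∂μ
      ≤ ∑ t ∈ Finset.Icc (r/q*q) r, ∫ ω, ‖x t ω - oneVec (blockAvg (x t ω))‖ ^ 2 ∂μ :=
    Finset.sum_le_sum_of_subset_of_nonneg hsub
      (fun t _ _ => integral_nonneg fun ω => by positivity)
  have hmy : ∑ t ∈ Finset.Ico (r/q*q) r, ∫ ω, ‖y t ω - oneVec (blockAvg (y t ω))‖ ^ 2 ∂μ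
      ≤ ∑ t ∈ Finset.Icc (r/q*q) r, ∫ ω, ‖y t ω - oneVec (blockAvg (y t ω))‖ ^ 2 ∂μ :=
    Finset.sum_le_sum_of_subset_of_nonneg hsub
      (fun t _ _ => integral_nonneg fun ω => by positivity)
  have hmb : ∑ t ∈ Finset.Ico (r/q*q) r, ∫ ω, ‖blockAvg (y t ω)‖ ^ 2 ∂μ
      ≤ ∑ t ∈ Finset.Icc (r/q*q) r, ∫ ω, ‖blockAvg (y t ω)‖ ^ 2 ∂μ :=
    Finset.sum_le_sum_of_subset_of_nonneg hsub
      (fun t _ _ => integral_nonneg fun ω => by positivity)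
  have hc1 : (0:ℝ) ≤ 8 * L ^ 2 / ((m : ℝ) * S2) := by positivity
  have hc2 : (0:ℝ) ≤ 4 * α ^ 2 * L ^ 2 / ((m : ℝ) * S2) := by positivity
  have hc3 : (0:ℝ) ≤ 4 * α ^ 2 * L ^ 2 / (S2 : ℝ) := by positivity
  have h1 := mul_le_mul_of_nonneg_left hmx hc1
  have h2 := mul_le_mul_of_nonneg_left hmy hc2
  have h3 := mul_le_mul_of_nonneg_left hmb hc3
  linarith
end
end

section
/- In the decentralized finite-sum setting with the D-GET algorithm, for every iteration r ≥ 1 with q not dividing r, the following one-step error recursions hold: E‖ȳ^r − (1/m)∑_{i=1}^m ∇f^i(x_i^r)‖² ≤ E‖ȳ^{r-1} − (1/m)∑_{i=1}^m ∇f^i(x_i^{r-1})‖² + (L²/(m|S₂|))·E‖x^r − x^{r-1}‖², and E‖v^r − G(x^r)‖² ≤ E‖v^{r-1} − G(x^{r-1})‖² + (L²/|S₂|)·E‖x^r − x^{r-1}‖². -/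
open Finset MeasureTheory ProbabilityTheory

noncomputable section

/-! ### Auxiliary lemmas for the proof of `stmt10` -/

section DGETAux

lemma dget_sum_eval {P J : Type*} [Fintype P] [DecidableEq P] [Fintype J] (p : P) (ψ : J → ℝ) :
    ∑ c : P → J, ψ (c p)
      = (Fintype.card J : ℝ) ^ (Fintype.card P - 1) * ∑ j, ψ j := by
  rw [← Equiv.sum_comp (Equiv.funSplitAt p J).symm (fun c : P → J => ψ (c p))]
  have h1 : ∀ x : J × ({ q // q ≠ p } → J), ((Equiv.funSplitAt p J).symm x) p = x.1 := by
    intro x; simp [Equiv.funSplitAt, Equiv.piSplitAt]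
  simp_rw [h1]
  rw [Fintype.sum_prod_type]
  have hcard : Fintype.card { q // q ≠ p } = Fintype.card P - 1 := by
    simp [Fintype.card_subtype_compl]
  simp only [Finset.sum_const, Finset.card_univ, Fintype.card_fun, smul_eq_mul, hcard,
    nsmul_eq_mul, Nat.cast_pow]
  rw [← Finset.mul_sum]

lemma dget_sum_eval2 {P J : Type*} [Fintype P] [DecidableEq P] [Fintype J] {p p' : P}
    (hne : p' ≠ p) (φ : J → J → ℝ) :
    ∑ c : P → J, φ (c p) (c p')
      = (Fintype.card J : ℝ) ^ (Fintype.card P - 2) * ∑ j, ∑ j', φ j j' := by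
  rw [← Equiv.sum_comp (Equiv.funSplitAt p J).symm (fun c : P → J => φ (c p) (c p'))]
  have h1 : ∀ x : J × ({ q // q ≠ p } → J), ((Equiv.funSplitAt p J).symm x) p = x.1 := by
    intro x; simp [Equiv.funSplitAt, Equiv.piSplitAt]
  have h2 : ∀ x : J × ({ q // q ≠ p } → J),
      ((Equiv.funSplitAt p J).symm x) p' = x.2 ⟨p', hne⟩ := by
    intro x; simp [Equiv.funSplitAt, Equiv.piSplitAt, hne]
  simp_rw [h1, h2]
  rw [Fintype.sum_prod_type]
  have key : ∀ a : J, ∑ g : { q // q ≠ p } → J, φ a (g ⟨p', hne⟩)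
      = (Fintype.card J : ℝ) ^ (Fintype.card { q // q ≠ p } - 1) * ∑ j', φ a j' := by
    intro a; exact dget_sum_eval (⟨p', hne⟩ : { q // q ≠ p }) (fun j' => φ a j')
  simp_rw [key]
  have hcard : Fintype.card { q // q ≠ p } - 1 = Fintype.card P - 2 := by
    simp [Fintype.card_subtype_compl, Nat.sub_sub]
  rw [hcard, ← Finset.mul_sum]

lemma dget_var_le {E : Type*} [NormedAddCommGroup E] [InnerProductSpace ℝ E]
    {k : ℕ} (g : Fin k → E) (w : E) (hw : (k : ℝ) • w = ∑ j, g j) :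
    ∑ j, ‖g j - w‖ ^ 2 ≤ ∑ j, ‖g j‖ ^ 2 := by
  have hsum : ∑ j, inner ℝ (g j) w = (k : ℝ) * ‖w‖ ^ 2 := by
    rw [← sum_inner, ← hw, real_inner_smul_left, real_inner_self_eq_norm_sq]
  have hexp : ∑ j, ‖g j - w‖ ^ 2
      = (∑ j, ‖g j‖ ^ 2) - 2 * ((k : ℝ) * ‖w‖ ^ 2) + (k : ℝ) * ‖w‖ ^ 2 := by
    simp_rw [norm_sub_sq_real]
    rw [Finset.sum_add_distrib, Finset.sum_sub_distrib, ← Finset.mul_sum, hsum]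
    simp [Finset.card_univ, mul_comm]
  have hk : 0 ≤ (k : ℝ) * ‖w‖ ^ 2 := by positivity
  nlinarith

section DGETCore
variable {m d n S2 : ℕ}

lemma dget_cross (h : Fin m → Fin n → Vec d) (hz : ∀ i, ∑ j, h i j = 0)
    (i : Fin m) (u : Vec d) :
    ∑ c : Fin S2 × Fin m → Fin n, (inner ℝ u (∑ b : Fin S2, h i (c (b, i))) : ℝ) = 0 := by
  simp_rw [inner_sum]
  rw [Finset.sum_comm]
  have key : ∀ b : Fin S2, ∑ c : Fin S2 × Fin m → Fin n, (inner ℝ u (h i (c (b, i))) : ℝ)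
      = (Fintype.card (Fin n) : ℝ) ^ (Fintype.card (Fin S2 × Fin m) - 1)
        * ∑ j, (inner ℝ u (h i j) : ℝ) := by
    intro b; exact dget_sum_eval (P := Fin S2 × Fin m) ((b, i)) (fun j => (inner ℝ u (h i j) : ℝ))
  simp_rw [key, ← inner_sum, hz i, inner_zero_right, mul_zero, Finset.sum_const_zero]

lemma dget_quad (h : Fin m → Fin n → Vec d) (hz : ∀ i, ∑ j, h i j = 0)
    (i i' : Fin m) :
    ∑ c : Fin S2 × Fin m → Fin n,
        (inner ℝ (∑ b : Fin S2, h i (c (b, i))) (∑ b' : Fin S2, h i' (c (b', i'))) : ℝ)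
      = if i = i' then (S2 : ℝ) * (n : ℝ) ^ (S2 * m - 1) * ∑ j, ‖h i j‖ ^ 2 else 0 := by
  simp_rw [sum_inner, inner_sum]
  rw [Finset.sum_comm]
  refine (Finset.sum_congr rfl fun b _ => Finset.sum_comm).trans ?_
  have key : ∀ b : Fin S2, ∀ b' : Fin S2,
      ∑ c : Fin S2 × Fin m → Fin n, (inner ℝ (h i (c (b, i))) (h i' (c (b', i'))) : ℝ)
      = if (b, i) = (b', i') then (n : ℝ) ^ (S2 * m - 1) * ∑ j, ‖h i j‖ ^ 2 else 0 := by
    intro b b'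
    rcases eq_or_ne ((b, i) : Fin S2 × Fin m) (b', i') with heq | hne
    · rw [if_pos heq]
      have hb : b = b' := congrArg Prod.fst heq
      have hi : i = i' := congrArg Prod.snd heq
      subst hb; subst hi
      rw [dget_sum_eval (P := Fin S2 × Fin m) ((b, i)) (fun j => (inner ℝ (h i j) (h i j) : ℝ))]
      simp only [Fintype.card_prod, Fintype.card_fin, real_inner_self_eq_norm_sq]
    · rw [if_neg hne]
      rw [dget_sum_eval2 (Ne.symm hne) (fun j j' => (inner ℝ (h i j) (h i' j') : ℝ))]
      have hj : ∀ j : Fin n, ∑ j' : Fin n, (inner ℝ (h i j) (h i' j') : ℝ) = 0 := by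
        intro j; rw [← inner_sum, hz i', inner_zero_right]
      simp only [hj, Finset.sum_const_zero, mul_zero]
  simp_rw [key]
  rcases eq_or_ne i i' with rfl | hii
  · rw [if_pos rfl]
    simp only [Prod.mk.injEq, eq_self_iff_true, and_true]
    have key2 : ∀ b : Fin S2, ∑ b' : Fin S2,
        (if b = b' then (n : ℝ) ^ (S2 * m - 1) * ∑ j, ‖h i j‖ ^ 2 else 0)
        = (n : ℝ) ^ (S2 * m - 1) * ∑ j, ‖h i j‖ ^ 2 := by
      intro b
      rw [Finset.sum_ite_eq Finset.univ b
        (fun _ => (n : ℝ) ^ (S2 * m - 1) * ∑ j, ‖h i j‖ ^ 2)]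
      simp
    simp_rw [key2]
    simp [Finset.card_univ, mul_assoc]
  · rw [if_neg hii]
    have hf : ∀ b b' : Fin S2, ((b, i) = (b', i')) = False := by
      simp [Prod.mk.injEq, hii]
    simp [hf]

set_option maxHeartbeats 1000000 in
lemma dget_pert2 (hn : 0 < n) (hS2 : 0 < S2) (hm : 0 < m) (L : ℝ)
    (a Δ : Stack m d) (h : Fin m → Fin n → Vec d)
    (hz : ∀ i, ∑ j, h i j = 0)
    (hb : ∀ i, ∑ j, ‖h i j‖ ^ 2 ≤ (n : ℝ) * (L ^ 2 * ‖Δ i‖ ^ 2))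
    (Z : (Fin S2 × Fin m → Fin n) → Stack m d)
    (hZ : ∀ c i, Z c i = a i + (S2 : ℝ)⁻¹ • ∑ b : Fin S2, h i (c (b, i))) :
    ∑ c : Fin S2 × Fin m → Fin n, ‖Z c‖ ^ 2
      ≤ (n : ℝ) ^ (S2 * m) * (‖a‖ ^ 2 + L ^ 2 / (S2 : ℝ) * ‖Δ‖ ^ 2) := by
  have hSm : 1 ≤ S2 * m := Nat.one_le_iff_ne_zero.mpr (Nat.mul_ne_zero hS2.ne' hm.ne')
  have hpow : (n : ℝ) ^ (S2 * m - 1) * (n : ℝ) = (n : ℝ) ^ (S2 * m) := by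
    rw [← pow_succ]; congr 1; omega
  have hcard : (Fintype.card (Fin S2 × Fin m → Fin n) : ℝ) = (n : ℝ) ^ (S2 * m) := by
    simp [Fintype.card_fun]
  have hS2' : (0 : ℝ) < (S2 : ℝ) := by exact_mod_cast hS2
  have per_i : ∀ i : Fin m, ∑ c : Fin S2 × Fin m → Fin n,
      ‖a i + (S2 : ℝ)⁻¹ • ∑ b : Fin S2, h i (c (b, i))‖ ^ 2
      ≤ (n : ℝ) ^ (S2 * m) * (‖a i‖ ^ 2 + L ^ 2 / (S2 : ℝ) * ‖Δ i‖ ^ 2) := by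
    intro i
    have expand : ∀ c : Fin S2 × Fin m → Fin n,
        ‖a i + (S2 : ℝ)⁻¹ • ∑ b : Fin S2, h i (c (b, i))‖ ^ 2
        = ‖a i‖ ^ 2
          + (2 * (S2 : ℝ)⁻¹) * (inner ℝ (a i) (∑ b : Fin S2, h i (c (b, i))) : ℝ)
          + ((S2 : ℝ)⁻¹ ^ 2) * ‖∑ b : Fin S2, h i (c (b, i))‖ ^ 2 := by
      intro c
      rw [norm_add_sq_real, real_inner_smul_right, norm_smul, mul_pow,
        Real.norm_eq_abs, abs_of_nonneg (le_of_lt (inv_pos.mpr hS2'))]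
      ring
    calc ∑ c : Fin S2 × Fin m → Fin n,
          ‖a i + (S2 : ℝ)⁻¹ • ∑ b : Fin S2, h i (c (b, i))‖ ^ 2
        = ∑ c : Fin S2 × Fin m → Fin n, (‖a i‖ ^ 2
            + (2 * (S2 : ℝ)⁻¹) * (inner ℝ (a i) (∑ b : Fin S2, h i (c (b, i))) : ℝ)
            + ((S2 : ℝ)⁻¹ ^ 2) * ‖∑ b : Fin S2, h i (c (b, i))‖ ^ 2) :=
          Finset.sum_congr rfl fun c _ => expand c
      _ = (Fintype.card (Fin S2 × Fin m → Fin n) : ℝ) * ‖a i‖ ^ 2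
            + (2 * (S2 : ℝ)⁻¹) * ∑ c : Fin S2 × Fin m → Fin n,
                (inner ℝ (a i) (∑ b : Fin S2, h i (c (b, i))) : ℝ)
            + ((S2 : ℝ)⁻¹ ^ 2) * ∑ c : Fin S2 × Fin m → Fin n,
                ‖∑ b : Fin S2, h i (c (b, i))‖ ^ 2 := by
          rw [Finset.sum_add_distrib, Finset.sum_add_distrib, ← Finset.mul_sum,
            ← Finset.mul_sum]
          simp [Finset.card_univ, nsmul_eq_mul]
      _ = (n : ℝ) ^ (S2 * m) * ‖a i‖ ^ 2
            + ((S2 : ℝ)⁻¹ ^ 2) * ((S2 : ℝ) * (n : ℝ) ^ (S2 * m - 1) * ∑ j, ‖h i j‖ ^ 2) := by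
          rw [hcard, dget_cross h hz i (a i)]
          have hq := dget_quad (S2 := S2) h hz i i
          rw [if_pos rfl] at hq
          simp_rw [real_inner_self_eq_norm_sq] at hq
          rw [hq]; ring
      _ ≤ (n : ℝ) ^ (S2 * m) * ‖a i‖ ^ 2
            + (S2 : ℝ)⁻¹ * (n : ℝ) ^ (S2 * m - 1) * ((n : ℝ) * (L ^ 2 * ‖Δ i‖ ^ 2)) := by
          have h1 : ((S2 : ℝ)⁻¹ ^ 2) * ((S2 : ℝ) * (n : ℝ) ^ (S2 * m - 1) * ∑ j, ‖h i j‖ ^ 2)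
              = (S2 : ℝ)⁻¹ * (n : ℝ) ^ (S2 * m - 1) * ∑ j, ‖h i j‖ ^ 2 := by
            field_simp
          rw [h1]
          have h2 : (0 : ℝ) ≤ (S2 : ℝ)⁻¹ * (n : ℝ) ^ (S2 * m - 1) := by positivity
          nlinarith [mul_le_mul_of_nonneg_left (hb i) h2]
      _ = (n : ℝ) ^ (S2 * m) * (‖a i‖ ^ 2 + L ^ 2 / (S2 : ℝ) * ‖Δ i‖ ^ 2) := by
          rw [← hpow]; field_simp
  have hnorm : ∀ c : Fin S2 × Fin m → Fin n,
      ‖Z c‖ ^ 2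
      = ∑ i, ‖a i + (S2 : ℝ)⁻¹ • ∑ b : Fin S2, h i (c (b, i))‖ ^ 2 := by
    intro c
    rw [PiLp.norm_sq_eq_of_L2 _ (Z c)]
    exact Finset.sum_congr rfl fun i _ => by rw [hZ c i]
  calc ∑ c : Fin S2 × Fin m → Fin n, ‖Z c‖ ^ 2
      = ∑ c : Fin S2 × Fin m → Fin n, ∑ i,
          ‖a i + (S2 : ℝ)⁻¹ • ∑ b : Fin S2, h i (c (b, i))‖ ^ 2 :=
        Finset.sum_congr rfl fun c _ => hnorm c
    _ = ∑ i, ∑ c : Fin S2 × Fin m → Fin n,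
          ‖a i + (S2 : ℝ)⁻¹ • ∑ b : Fin S2, h i (c (b, i))‖ ^ 2 := Finset.sum_comm
    _ ≤ ∑ i, (n : ℝ) ^ (S2 * m) * (‖a i‖ ^ 2 + L ^ 2 / (S2 : ℝ) * ‖Δ i‖ ^ 2) :=
        Finset.sum_le_sum fun i _ => per_i i
    _ = (n : ℝ) ^ (S2 * m) * (‖a‖ ^ 2 + L ^ 2 / (S2 : ℝ) * ‖Δ‖ ^ 2) := by
        rw [← Finset.mul_sum, Finset.sum_add_distrib, ← Finset.mul_sum,
          PiLp.norm_sq_eq_of_L2 _ a, PiLp.norm_sq_eq_of_L2 _ Δ]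

set_option maxHeartbeats 1000000 in
lemma dget_pert1 (hn : 0 < n) (hS2 : 0 < S2) (hm : 0 < m) (L : ℝ)
    (u : Vec d) (Δ : Stack m d) (h : Fin m → Fin n → Vec d)
    (hz : ∀ i, ∑ j, h i j = 0)
    (hb : ∀ i, ∑ j, ‖h i j‖ ^ 2 ≤ (n : ℝ) * (L ^ 2 * ‖Δ i‖ ^ 2))
    (Zb : (Fin S2 × Fin m → Fin n) → Vec d)
    (hZ : ∀ c, Zb c = u + ((m : ℝ)⁻¹ * (S2 : ℝ)⁻¹) • ∑ i, ∑ b : Fin S2, h i (c (b, i))) :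
    ∑ c : Fin S2 × Fin m → Fin n, ‖Zb c‖ ^ 2
      ≤ (n : ℝ) ^ (S2 * m) * (‖u‖ ^ 2 + L ^ 2 / ((m : ℝ) * (S2 : ℝ)) * ‖Δ‖ ^ 2) := by
  have hSm : 1 ≤ S2 * m := Nat.one_le_iff_ne_zero.mpr (Nat.mul_ne_zero hS2.ne' hm.ne')
  have hpow : (n : ℝ) ^ (S2 * m - 1) * (n : ℝ) = (n : ℝ) ^ (S2 * m) := by
    rw [← pow_succ]; congr 1; omega
  have hcard : (Fintype.card (Fin S2 × Fin m → Fin n) : ℝ) = (n : ℝ) ^ (S2 * m) := by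
    simp [Fintype.card_fun]
  have hS2' : (0 : ℝ) < (S2 : ℝ) := by exact_mod_cast hS2
  have hm' : (0 : ℝ) < (m : ℝ) := by exact_mod_cast hm
  have h1m : (1 : ℝ) ≤ (m : ℝ) := by exact_mod_cast hm
  have hr : (0 : ℝ) ≤ (m : ℝ)⁻¹ * (S2 : ℝ)⁻¹ := by positivity
  have expand : ∀ c : Fin S2 × Fin m → Fin n,
      ‖Zb c‖ ^ 2 = ‖u‖ ^ 2
        + (2 * ((m : ℝ)⁻¹ * (S2 : ℝ)⁻¹)) *
            (inner ℝ u (∑ i, ∑ b : Fin S2, h i (c (b, i))) : ℝ)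
        + (((m : ℝ)⁻¹ * (S2 : ℝ)⁻¹) ^ 2) * ‖∑ i, ∑ b : Fin S2, h i (c (b, i))‖ ^ 2 := by
    intro c
    rw [hZ c, norm_add_sq_real, real_inner_smul_right, norm_smul, mul_pow,
      Real.norm_eq_abs, abs_of_nonneg hr]
    ring
  have ecross : ∑ c : Fin S2 × Fin m → Fin n,
      (inner ℝ u (∑ i, ∑ b : Fin S2, h i (c (b, i))) : ℝ) = 0 := by
    have step : ∀ c : Fin S2 × Fin m → Fin n,
        (inner ℝ u (∑ i, ∑ b : Fin S2, h i (c (b, i))) : ℝ)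
        = ∑ i, (inner ℝ u (∑ b : Fin S2, h i (c (b, i))) : ℝ) := by
      intro c; rw [inner_sum]
    simp_rw [step]
    rw [Finset.sum_comm]
    exact Finset.sum_eq_zero fun i _ => dget_cross h hz i u
  have equad : ∑ c : Fin S2 × Fin m → Fin n,
      ‖∑ i, ∑ b : Fin S2, h i (c (b, i))‖ ^ 2
      = (S2 : ℝ) * (n : ℝ) ^ (S2 * m - 1) * ∑ i, ∑ j, ‖h i j‖ ^ 2 := by
    have hns : ∀ c : Fin S2 × Fin m → Fin n,
        ‖∑ i, ∑ b : Fin S2, h i (c (b, i))‖ ^ 2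
        = ∑ i, ∑ i', (inner ℝ (∑ b : Fin S2, h i (c (b, i)))
            (∑ b' : Fin S2, h i' (c (b', i'))) : ℝ) := by
      intro c
      rw [← real_inner_self_eq_norm_sq, sum_inner]
      exact Finset.sum_congr rfl fun i _ => by rw [inner_sum]
    simp_rw [hns]
    rw [Finset.sum_comm]
    refine ((Finset.sum_congr rfl fun i _ => Finset.sum_comm).trans ?_)
    have key : ∀ i : Fin m, ∑ i' : Fin m, ∑ c : Fin S2 × Fin m → Fin n,
        (inner ℝ (∑ b : Fin S2, h i (c (b, i))) (∑ b' : Fin S2, h i' (c (b', i'))) : ℝ)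
        = (S2 : ℝ) * (n : ℝ) ^ (S2 * m - 1) * ∑ j, ‖h i j‖ ^ 2 := by
      intro i
      have hq : ∀ i' : Fin m, ∑ c : Fin S2 × Fin m → Fin n,
          (inner ℝ (∑ b : Fin S2, h i (c (b, i))) (∑ b' : Fin S2, h i' (c (b', i'))) : ℝ)
          = if i = i' then (S2 : ℝ) * (n : ℝ) ^ (S2 * m - 1) * ∑ j, ‖h i j‖ ^ 2 else 0 :=
        fun i' => dget_quad h hz i i'
      simp_rw [hq]
      rw [Finset.sum_ite_eq Finset.univ i
        (fun _ => (S2 : ℝ) * (n : ℝ) ^ (S2 * m - 1) * ∑ j, ‖h i j‖ ^ 2)]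
      simp
    simp_rw [key]
    rw [← Finset.mul_sum]
  have hmain : ∑ c : Fin S2 × Fin m → Fin n, ‖Zb c‖ ^ 2
      = (n : ℝ) ^ (S2 * m) * ‖u‖ ^ 2
        + (((m : ℝ)⁻¹ * (S2 : ℝ)⁻¹) ^ 2) *
            ((S2 : ℝ) * (n : ℝ) ^ (S2 * m - 1) * ∑ i, ∑ j, ‖h i j‖ ^ 2) := by
    rw [Finset.sum_congr rfl fun c _ => expand c]
    rw [Finset.sum_add_distrib, Finset.sum_add_distrib, ← Finset.mul_sum,
      ← Finset.mul_sum, ecross, equad, Finset.sum_const, Finset.card_univ,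
      nsmul_eq_mul, hcard, mul_zero, add_zero]
  rw [hmain, PiLp.norm_sq_eq_of_L2 _ Δ]
  have hQ : ∑ i, ∑ j, ‖h i j‖ ^ 2 ≤ (n : ℝ) * (L ^ 2 * ∑ i, ‖Δ i‖ ^ 2) := by
    calc ∑ i, ∑ j, ‖h i j‖ ^ 2 ≤ ∑ i, (n : ℝ) * (L ^ 2 * ‖Δ i‖ ^ 2) :=
        Finset.sum_le_sum fun i _ => hb i
      _ = (n : ℝ) * (L ^ 2 * ∑ i, ‖Δ i‖ ^ 2) := by
        rw [← Finset.mul_sum, ← Finset.mul_sum]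
  have hRn : (0 : ℝ) ≤ ∑ i, ‖Δ i‖ ^ 2 := Finset.sum_nonneg fun i _ => by positivity
  have step1 : (((m : ℝ)⁻¹ * (S2 : ℝ)⁻¹) ^ 2) *
        ((S2 : ℝ) * (n : ℝ) ^ (S2 * m - 1) * ∑ i, ∑ j, ‖h i j‖ ^ 2)
      ≤ (((m : ℝ)⁻¹ * (S2 : ℝ)⁻¹) ^ 2) *
        ((S2 : ℝ) * (n : ℝ) ^ (S2 * m - 1) * ((n : ℝ) * (L ^ 2 * ∑ i, ‖Δ i‖ ^ 2))) := by
    gcongr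
  have step2 : (((m : ℝ)⁻¹ * (S2 : ℝ)⁻¹) ^ 2) *
        ((S2 : ℝ) * (n : ℝ) ^ (S2 * m - 1) * ((n : ℝ) * (L ^ 2 * ∑ i, ‖Δ i‖ ^ 2)))
      = (n : ℝ) ^ (S2 * m) * (L ^ 2 / ((m : ℝ) * (m : ℝ) * (S2 : ℝ)) * ∑ i, ‖Δ i‖ ^ 2) := by
    rw [← hpow]
    field_simp
  have step3 : (n : ℝ) ^ (S2 * m) * (L ^ 2 / ((m : ℝ) * (m : ℝ) * (S2 : ℝ)) * ∑ i, ‖Δ i‖ ^ 2)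
      ≤ (n : ℝ) ^ (S2 * m) * (L ^ 2 / ((m : ℝ) * (S2 : ℝ)) * ∑ i, ‖Δ i‖ ^ 2) := by
    apply mul_le_mul_of_nonneg_left _ (by positivity)
    apply mul_le_mul_of_nonneg_right _ hRn
    apply div_le_div_of_nonneg_left (by positivity) (by positivity)
    nlinarith [mul_le_mul_of_nonneg_right h1m (le_of_lt (mul_pos hm' hS2'))]
  nlinarith [step1, step2, step3]

end DGETCore

lemma dget_gradient_fLoc {m d n : ℕ} (f : Fin m → Fin n → Vec d → ℝ)
    (hdiff : ∀ i j, Differentiable ℝ (f i j)) (i : Fin m) (u : Vec d) :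
    gradient (fLoc f i) u = (n : ℝ)⁻¹ • ∑ j, gradient (f i j) u := by
  unfold gradient fLoc
  have h1 : fderiv ℝ (fun w => (n : ℝ)⁻¹ * ∑ j, f i j w) u
      = (n : ℝ)⁻¹ • fderiv ℝ (fun w => ∑ j, f i j w) u := by
    rw [fderiv_const_mul]
    exact DifferentiableAt.fun_sum fun j _ => (hdiff i j).differentiableAt
  have h2 : fderiv ℝ (fun w => ∑ j, f i j w) u = ∑ j, fderiv ℝ (f i j) u := by
    rw [fderiv_fun_sum]
    intro j _
    exact (hdiff i j).differentiableAt
  rw [h1, h2, _root_.map_smul, map_sum]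

lemma dget_sum_gradient {m d n : ℕ} (f : Fin m → Fin n → Vec d → ℝ)
    (hdiff : ∀ i j, Differentiable ℝ (f i j)) (hn : 0 < n) (i : Fin m) (u : Vec d) :
    ∑ j, gradient (f i j) u = (n : ℝ) • gradient (fLoc f i) u := by
  rw [dget_gradient_fLoc f hdiff i u, smul_smul]
  rw [mul_inv_cancel₀ (by exact_mod_cast hn.ne' : (n : ℝ) ≠ 0), one_smul]

lemma dget_integral_eq_sum {Ω : Type*} [MeasurableSpace Ω] (μ : Measure Ω)
    [IsProbabilityMeasure μ] {S : Type*} [Fintype S] [DecidableEq S] (T : Ω → S)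
    (hT : ∀ s, MeasurableSet (T ⁻¹' {s})) (φ : S → ℝ) :
    ∫ ω, φ (T ω) ∂μ = ∑ s, (μ (T ⁻¹' {s})).toReal * φ s := by
  have hpt : ∀ ω, φ (T ω) = ∑ s, Set.indicator (T ⁻¹' {s}) (fun _ => φ s) ω := by
    intro ω
    rw [Finset.sum_eq_single (T ω)]
    · rw [Set.indicator_of_mem (by simp : ω ∈ T ⁻¹' {T ω})]
    · intro b _ hb
      apply Set.indicator_of_notMem
      simp only [Set.mem_preimage, Set.mem_singleton_iff]
      exact fun hc => hb (hc ▸ rfl)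
    · simp
  calc ∫ ω, φ (T ω) ∂μ
      = ∫ ω, ∑ s, Set.indicator (T ⁻¹' {s}) (fun _ => φ s) ω ∂μ :=
        integral_congr_ae (Filter.Eventually.of_forall hpt)
    _ = ∑ s, ∫ ω, Set.indicator (T ⁻¹' {s}) (fun _ => φ s) ω ∂μ := by
        apply integral_finset_sum
        intro s _
        exact (integrable_const (φ s)).indicator (hT s)
    _ = ∑ s, (μ (T ⁻¹' {s})).toReal * φ s := by
        refine Finset.sum_congr rfl fun s _ => ?_
        rw [integral_indicator_const (φ s) (hT s), smul_eq_mul]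
        rfl

set_option maxHeartbeats 1000000 in
lemma dget_prod {m n S2 : ℕ} (hn : 0 < n)
    {Ω : Type} [MeasurableSpace Ω] (μ : Measure Ω) [IsProbabilityMeasure μ]
    (J : ℕ → Fin S2 → Fin m → Ω → Fin n)
    (hJunif : ∀ r b i j, μ {ω | J r b i ω = j} = (n : ENNReal)⁻¹)
    (hJindep : iIndepFun
      (fun p : ℕ × Fin S2 × Fin m => J p.1 p.2.1 p.2.2) μ)
    (r : ℕ) (t : Fin r → Fin S2 → Fin m → Fin n) (c : Fin S2 × Fin m → Fin n) :
    μ ({ω | (fun (s : Fin r) b i => J (s.1 + 1) b i ω) = t}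
        ∩ {ω | (fun p : Fin S2 × Fin m => J (r + 1) p.1 p.2 ω) = c})
      = μ {ω | (fun (s : Fin r) b i => J (s.1 + 1) b i ω) = t}
        * ((n : ENNReal))⁻¹ ^ (S2 * m) := by
  classical
  set val : ℕ × Fin S2 × Fin m → Fin n := fun p =>
    if p.1 = r + 1 then c (p.2.1, p.2.2)
    else if hq : p.1 - 1 < r then t ⟨p.1 - 1, hq⟩ p.2.1 p.2.2 else ⟨0, hn⟩ with hval
  set E : ℕ × Fin S2 × Fin m → Set Ω :=
    fun p => {ω | J p.1 p.2.1 p.2.2 ω = val p} with hE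
  have hmeasE : ∀ p : ℕ × Fin S2 × Fin m,
      MeasurableSet[MeasurableSpace.comap
        ((fun p : ℕ × Fin S2 × Fin m => J p.1 p.2.1 p.2.2) p) inferInstance] (E p) := by
    intro p
    exact ⟨{val p}, measurableSet_singleton _, rfl⟩
  set emb1 : Fin r × Fin S2 × Fin m → ℕ × Fin S2 × Fin m :=
    fun q => (q.1.1 + 1, q.2.1, q.2.2) with hemb1
  set emb2 : Fin S2 × Fin m → ℕ × Fin S2 × Fin m :=
    fun b => (r + 1, b.1, b.2) with hemb2
  set S1 : Finset (ℕ × Fin S2 × Fin m) := Finset.image emb1 Finset.univ with hS1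
  set SK : Finset (ℕ × Fin S2 × Fin m) := Finset.image emb2 Finset.univ with hSK
  have hval1 : ∀ q : Fin r × Fin S2 × Fin m, val (emb1 q) = t q.1 q.2.1 q.2.2 := by
    intro q
    have h1 : q.1.1 + 1 ≠ r + 1 := by have := q.1.isLt; omega
    have h2 : q.1.1 + 1 - 1 < r := by have := q.1.isLt; omega
    simp only [hval, hemb1, if_neg h1, dif_pos h2]
    have h3 : (⟨q.1.1 + 1 - 1, h2⟩ : Fin r) = q.1 := Fin.ext (by simp)
    rw [h3]
  have hval2 : ∀ b : Fin S2 × Fin m, val (emb2 b) = c b := by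
    intro b
    simp only [hval, hemb2, if_pos rfl]
  have heq1 : {ω | (fun (s : Fin r) b i => J (s.1 + 1) b i ω) = t} = ⋂ p ∈ S1, E p := by
    ext ω
    simp only [Set.mem_setOf_eq, funext_iff, Set.mem_iInter, hS1, Finset.mem_image,
      Finset.mem_univ, true_and, forall_exists_index]
    constructor
    · rintro hω p q rfl
      rw [hE]
      simp only [Set.mem_setOf_eq, hval1 q]
      exact hω q.1 q.2.1 q.2.2
    · intro hω s b i
      have := hω (emb1 (s, b, i)) (s, b, i) rfl
      rw [hE] at this
      simp only [Set.mem_setOf_eq, hval1 (s, b, i)] at this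
      exact this
  have heq2 : {ω | (fun p : Fin S2 × Fin m => J (r + 1) p.1 p.2 ω) = c} = ⋂ p ∈ SK, E p := by
    ext ω
    simp only [Set.mem_setOf_eq, funext_iff, Set.mem_iInter, hSK, Finset.mem_image,
      Finset.mem_univ, true_and, forall_exists_index]
    constructor
    · rintro hω p b rfl
      rw [hE]
      simp only [Set.mem_setOf_eq, hval2 b]
      exact hω b
    · intro hω b
      have := hω (emb2 b) b rfl
      rw [hE] at this
      simp only [Set.mem_setOf_eq, hval2 b] at this
      exact this
  have hdisj : Disjoint S1 SK := by
    rw [Finset.disjoint_left]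
    rintro p hp1 hp2
    rw [hS1, Finset.mem_image] at hp1
    rw [hSK, Finset.mem_image] at hp2
    obtain ⟨q, -, rfl⟩ := hp1
    obtain ⟨b, -, hb⟩ := hp2
    have := q.1.isLt
    have h2 : (emb2 b).1 = r + 1 := rfl
    rw [hb] at h2
    simp only [hemb1] at h2
    omega
  have hunionInter : ({ω | (fun (s : Fin r) b i => J (s.1 + 1) b i ω) = t}
      ∩ {ω | (fun p : Fin S2 × Fin m => J (r + 1) p.1 p.2 ω) = c})
      = ⋂ p ∈ S1 ∪ SK, E p := by
    rw [heq1, heq2]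
    ext ω
    simp only [Set.mem_inter_iff, Set.mem_iInter, Finset.mem_union]
    constructor
    · rintro ⟨h1, h2⟩ p hp
      rcases hp with hp | hp
      exacts [h1 p hp, h2 p hp]
    · intro hp
      exact ⟨fun p h => hp p (Or.inl h), fun p h => hp p (Or.inr h)⟩
  have hmeasure : ∀ p, μ (E p) = (n : ENNReal)⁻¹ := fun p => hJunif p.1 p.2.1 p.2.2 (val p)
  have hcardSK : SK.card = S2 * m := by
    rw [hSK, Finset.card_image_of_injective _ (fun a b hab => by
      simpa [hemb2, Prod.ext_iff] using hab)]
    simp [Fintype.card_prod]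
  rw [hunionInter, hJindep.meas_biInter (fun p _ => hmeasE p),
    Finset.prod_union hdisj, heq1, hJindep.meas_biInter (fun p _ => hmeasE p)]
  congr 1
  rw [Finset.prod_congr rfl (fun p _ => hmeasure p), Finset.prod_const, hcardSK]

end DGETAux

/-- one-step recursions of the tracking and estimation errors at any
iteration `r ≥ 1` not divisible by `q` (stated for `r + 1` with `¬ q ∣ (r + 1)`). -/
theorem stmt10
    (m d n q S2 : ℕ) (hm : 0 < m) (hn : 0 < n) (hq : 1 ≤ q) (hS2 : 0 < S2)
    (L η α : ℝ) (hL : 0 ≤ L) (hη0 : 0 ≤ η) (hη1 : η < 1) (hα : 0 < α)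
    (f : Fin m → Fin n → Vec d → ℝ)
    (hdiff : ∀ i j, Differentiable ℝ (f i j))
    (hlip : ∀ i j (u u' : Vec d),
      ‖gradient (f i j) u - gradient (f i j) u'‖ ≤ L * ‖u - u'‖)
    (W : Matrix (Fin m) (Fin m) ℝ) (hWsymm : W.IsSymm)
    (hW1 : W.mulVec (fun _ => (1 : ℝ)) = fun _ => (1 : ℝ))
    (hWcontract : ∀ u : Vec m, (∑ k, u k) = 0 → ‖mulVecE W u‖ ≤ η * ‖u‖)
    (Ω : Type) [MeasurableSpace Ω] (μ : Measure Ω) [IsProbabilityMeasure μ]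
    (J : ℕ → Fin S2 → Fin m → Ω → Fin n)
    (hJmeas : ∀ r b i, Measurable (J r b i))
    (hJunif : ∀ r b i j, μ {ω | J r b i ω = j} = (n : ENNReal)⁻¹)
    (hJindep : iIndepFun
      (fun p : ℕ × Fin S2 × Fin m => J p.1 p.2.1 p.2.2) μ)
    (x0 : Stack m d) (x v y : ℕ → Ω → Stack m d)
    (hx0 : ∀ ω, x 0 ω = x0)
    (hy0 : ∀ ω, y 0 ω = v 0 ω)
    (hxrec : ∀ r ω, x (r + 1) ω = Wact W (x r ω) - α • y r ω)
    (hvfull : ∀ r, q ∣ r → ∀ ω, v r ω = Gmap f (x r ω))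
    (hvest : ∀ r, ¬ q ∣ (r + 1) → ∀ ω i, v (r + 1) ω i =
      (S2 : ℝ)⁻¹ • ∑ b, (gradient (f i (J (r + 1) b i ω)) (x (r + 1) ω i)
        - gradient (f i (J (r + 1) b i ω)) (x r ω i)) + v r ω i)
    (hyrec : ∀ r ω, y (r + 1) ω = Wact W (y r ω) + v (r + 1) ω - v r ω)
    :
    ∀ r : ℕ, ¬ q ∣ (r + 1) →
      ((∫ ω, ‖blockAvg (y (r + 1) ω) - avgGrad f (x (r + 1) ω)‖ ^ 2 ∂μ) ≤
          (∫ ω, ‖blockAvg (y r ω) - avgGrad f (x r ω)‖ ^ 2 ∂μ)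
          + L ^ 2 / ((m : ℝ) * S2) * ∫ ω, ‖x (r + 1) ω - x r ω‖ ^ 2 ∂μ) ∧
      ((∫ ω, ‖v (r + 1) ω - Gmap f (x (r + 1) ω)‖ ^ 2 ∂μ) ≤
          (∫ ω, ‖v r ω - Gmap f (x r ω)‖ ^ 2 ∂μ)
          + L ^ 2 / (S2 : ℝ) * ∫ ω, ‖x (r + 1) ω - x r ω‖ ^ 2 ∂μ) := by
  classical
  have hnR : (0 : ℝ) < (n : ℝ) := by exact_mod_cast hn
  have hS2R : (0 : ℝ) < (S2 : ℝ) := by exact_mod_cast hS2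
  have hmR : (0 : ℝ) < (m : ℝ) := by exact_mod_cast hm
  -- column sums of W are 1
  have hrow : ∀ i : Fin m, ∑ k, W i k = 1 := by
    intro i
    have := congrFun hW1 i
    simpa [Matrix.mulVec, dotProduct] using this
  have hcol : ∀ k : Fin m, ∑ i, W i k = 1 := by
    intro k
    have hsymm : ∀ i, W i k = W k i := fun i => (Matrix.IsSymm.apply hWsymm i k).symm
    calc ∑ i, W i k = ∑ i, W k i := Finset.sum_congr rfl fun i _ => hsymm i
      _ = 1 := hrow k
  -- averaging is preserved by Wact
  have hWA : ∀ z : Stack m d, blockAvg (Wact W z) = blockAvg z := by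
    intro z
    unfold blockAvg Wact
    congr 1
    calc ∑ i, ∑ k, W i k • z k = ∑ k, ∑ i, W i k • z k := Finset.sum_comm
      _ = ∑ k, (∑ i, W i k) • z k := by
          refine Finset.sum_congr rfl fun k _ => ?_
          rw [Finset.sum_smul]
      _ = ∑ k, z k := by
          refine Finset.sum_congr rfl fun k _ => ?_
          rw [hcol k, one_smul]
  -- block average linearity
  have hbadd : ∀ a b : Stack m d, blockAvg (a + b) = blockAvg a + blockAvg b := by
    intro a b
    unfold blockAvg
    rw [← smul_add, ← Finset.sum_add_distrib]
    rfl
  have hbsub : ∀ a b : Stack m d, blockAvg (a - b) = blockAvg a - blockAvg b := by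
    intro a b
    unfold blockAvg
    rw [← smul_sub, ← Finset.sum_sub_distrib]
    rfl
  have havg : ∀ z : Stack m d, avgGrad f z = blockAvg (Gmap f z) := fun z => rfl
  -- bar y = bar v
  have hbar : ∀ s : ℕ, ∀ ω, blockAvg (y s ω) = blockAvg (v s ω) := by
    intro s
    induction s with
    | zero => intro ω; rw [hy0 ω]
    | succ s ih =>
      intro ω
      rw [hyrec s ω, hbsub, hbadd, hWA, ih ω, add_sub_cancel_left]
  -- factorization through the sampling history
  have factor : ∀ r : ℕ, ∃ X V Y : (Fin r → Fin S2 → Fin m → Fin n) → Stack m d,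
      ∀ ω, x r ω = X (fun s b i => J (s.1 + 1) b i ω)
        ∧ v r ω = V (fun s b i => J (s.1 + 1) b i ω)
        ∧ y r ω = Y (fun s b i => J (s.1 + 1) b i ω) := by
    intro r
    induction r with
    | zero =>
      refine ⟨fun _ => x0, fun _ => Gmap f x0, fun _ => Gmap f x0, fun ω => ?_⟩
      have hx := hx0 ω
      have hv : v 0 ω = Gmap f x0 := by rw [hvfull 0 (dvd_zero q) ω, hx]
      exact ⟨hx, hv, by rw [hy0 ω, hv]⟩
    | succ r ih =>
      obtain ⟨X, V, Y, hfac⟩ := ih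
      set ρ : (Fin (r + 1) → Fin S2 → Fin m → Fin n) → (Fin r → Fin S2 → Fin m → Fin n) :=
        fun u s => u s.castSucc with hρ
      have hρT : ∀ ω, ρ (fun (s : Fin (r + 1)) b i => J (s.1 + 1) b i ω)
          = fun (s : Fin r) b i => J (s.1 + 1) b i ω := by
        intro ω; funext s b i; simp [hρ]
      set X' : (Fin (r + 1) → Fin S2 → Fin m → Fin n) → Stack m d :=
        fun u => Wact W (X (ρ u)) - α • Y (ρ u) with hX'
      set V' : (Fin (r + 1) → Fin S2 → Fin m → Fin n) → Stack m d := fun u =>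
        if q ∣ (r + 1) then Gmap f (X' u)
        else WithLp.toLp 2 (fun i => (S2 : ℝ)⁻¹ • ∑ b, (gradient (f i (u (Fin.last r) b i)) (X' u i)
          - gradient (f i (u (Fin.last r) b i)) (X (ρ u) i)) + V (ρ u) i) with hV'
      refine ⟨X', V', fun u => Wact W (Y (ρ u)) + V' u - V (ρ u), fun ω => ?_⟩
      have hx' : x (r + 1) ω = X' (fun (s : Fin (r + 1)) b i => J (s.1 + 1) b i ω) := by
        rw [hxrec r ω, (hfac ω).1, (hfac ω).2.2]
        simp only [hX']
        rw [hρT ω]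
      have hv' : v (r + 1) ω = V' (fun (s : Fin (r + 1)) b i => J (s.1 + 1) b i ω) := by
        by_cases hqd : q ∣ (r + 1)
        · rw [hvfull (r + 1) hqd ω]
          simp only [hV', if_pos hqd]
          rw [hx']
        · simp only [hV', if_neg hqd]
          refine PiLp.ext fun i => ?_
          rw [hvest r hqd ω i, (hfac ω).2.1, (hfac ω).1, hρT ω, ← hx']
          simp [Fin.val_last]
      refine ⟨hx', hv', ?_⟩
      simp only [hρT ω]
      rw [hyrec r ω, (hfac ω).2.2, (hfac ω).2.1, ← hv']
  -- fix the iteration index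
  intro r hr
  obtain ⟨X, V, Y, hfac⟩ := factor r
  set T : Ω → (Fin r → Fin S2 → Fin m → Fin n) := fun ω s b i => J (s.1 + 1) b i ω with hT
  set K : Ω → (Fin S2 × Fin m → Fin n) := fun ω p => J (r + 1) p.1 p.2 ω with hK
  set X' : (Fin r → Fin S2 → Fin m → Fin n) → Stack m d :=
    fun u => Wact W (X u) - α • Y u with hX'
  set A : (Fin r → Fin S2 → Fin m → Fin n) → Stack m d :=
    fun u => V u - Gmap f (X u) with hA
  set Δ : (Fin r → Fin S2 → Fin m → Fin n) → Stack m d := fun u => X' u - X u with hΔ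
  set h : (Fin r → Fin S2 → Fin m → Fin n) → Fin m → Fin n → Vec d := fun u i j =>
    (gradient (f i j) (X' u i) - gradient (f i j) (X u i))
      - (gradient (fLoc f i) (X' u i) - gradient (fLoc f i) (X u i)) with hh
  set Zfun : (Fin r → Fin S2 → Fin m → Fin n) → (Fin S2 × Fin m → Fin n) → Stack m d :=
    fun u c => WithLp.toLp 2 (fun i => A u i + (S2 : ℝ)⁻¹ • ∑ b, h u i (c (b, i))) with hZfun
  set Zbar : (Fin r → Fin S2 → Fin m → Fin n) → (Fin S2 × Fin m → Fin n) → Vec d :=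
    fun u c => blockAvg (A u) + ((m : ℝ)⁻¹ * (S2 : ℝ)⁻¹) • ∑ i, ∑ b, h u i (c (b, i))
    with hZbar
  have hxT : ∀ ω, x r ω = X (T ω) := fun ω => (hfac ω).1
  have hvT : ∀ ω, v r ω = V (T ω) := fun ω => (hfac ω).2.1
  have hx'T : ∀ ω, x (r + 1) ω = X' (T ω) := by
    intro ω
    rw [hxrec r ω, (hfac ω).1, (hfac ω).2.2]
  have hΔT : ∀ ω, x (r + 1) ω - x r ω = Δ (T ω) := by
    intro ω; rw [hx'T ω, hxT ω]
  have hAT : ∀ ω, v r ω - Gmap f (x r ω) = A (T ω) := by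
    intro ω; rw [hvT ω, hxT ω]
  -- the second-order properties of h
  have hgsum : ∀ u i, ∑ j, (gradient (f i j) (X' u i) - gradient (f i j) (X u i))
      = (n : ℝ) • (gradient (fLoc f i) (X' u i) - gradient (fLoc f i) (X u i)) := by
    intro u i
    rw [Finset.sum_sub_distrib, dget_sum_gradient f hdiff hn, dget_sum_gradient f hdiff hn,
      smul_sub]
  have hz : ∀ u i, ∑ j, h u i j = 0 := by
    intro u i
    rw [hh]
    rw [Finset.sum_sub_distrib, hgsum u i, Finset.sum_const, Finset.card_univ,
      Fintype.card_fin, ← Nat.cast_smul_eq_nsmul ℝ, sub_self]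
  have hΔi : ∀ u i, Δ u i = X' u i - X u i := fun u i => rfl
  have hbnd : ∀ u i, ∑ j, ‖h u i j‖ ^ 2 ≤ (n : ℝ) * (L ^ 2 * ‖Δ u i‖ ^ 2) := by
    intro u i
    have hvar := dget_var_le (fun j => gradient (f i j) (X' u i) - gradient (f i j) (X u i))
      (gradient (fLoc f i) (X' u i) - gradient (fLoc f i) (X u i)) (hgsum u i).symm
    have hle : ∑ j, ‖gradient (f i j) (X' u i) - gradient (f i j) (X u i)‖ ^ 2
        ≤ (n : ℝ) * (L ^ 2 * ‖Δ u i‖ ^ 2) := by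
      have hperj : ∀ j : Fin n, ‖gradient (f i j) (X' u i) - gradient (f i j) (X u i)‖ ^ 2
          ≤ L ^ 2 * ‖Δ u i‖ ^ 2 := by
        intro j
        have := hlip i j (X' u i) (X u i)
        rw [hΔi u i]
        calc ‖gradient (f i j) (X' u i) - gradient (f i j) (X u i)‖ ^ 2
            ≤ (L * ‖X' u i - X u i‖) ^ 2 := by
              apply pow_le_pow_left₀ (norm_nonneg _) this
          _ = L ^ 2 * ‖X' u i - X u i‖ ^ 2 := by ring
      calc ∑ j, ‖gradient (f i j) (X' u i) - gradient (f i j) (X u i)‖ ^ 2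
          ≤ ∑ _j : Fin n, L ^ 2 * ‖Δ u i‖ ^ 2 := Finset.sum_le_sum fun j _ => hperj j
        _ = (n : ℝ) * (L ^ 2 * ‖Δ u i‖ ^ 2) := by
            rw [Finset.sum_const, Finset.card_univ, Fintype.card_fin, nsmul_eq_mul]
    exact le_trans hvar hle
  -- pointwise identification of the estimation error
  have hvGT : ∀ ω, v (r + 1) ω - Gmap f (x (r + 1) ω) = Zfun (T ω) (K ω) := by
    intro ω
    refine PiLp.ext fun i => ?_
    have hvi := hvest r hr ω i
    have hGi : Gmap f (x (r + 1) ω) i = gradient (fLoc f i) (X' (T ω) i) := by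
      rw [hx'T ω]; rfl
    have hKi : ∀ b : Fin S2, J (r + 1) b i ω = K ω (b, i) := fun b => rfl
    set w : Vec d := gradient (fLoc f i) (X' (T ω) i) - gradient (fLoc f i) (X (T ω) i)
      with hw
    set G : Fin S2 → Vec d := fun b => gradient (f i (K ω (b, i))) (X' (T ω) i)
      - gradient (f i (K ω (b, i))) (X (T ω) i) with hG
    have hsum1 : ∑ b, (gradient (f i (J (r + 1) b i ω)) (x (r + 1) ω i)
        - gradient (f i (J (r + 1) b i ω)) (x r ω i)) = ∑ b, G b := by
      refine Finset.sum_congr rfl fun b _ => ?_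
      rw [hG, hKi b, hx'T ω, hxT ω]
    have hsum2 : ∑ b, h (T ω) i (K ω (b, i)) = (∑ b, G b) - (S2 : ℝ) • w := by
      have : ∀ b : Fin S2, h (T ω) i (K ω (b, i)) = G b - w := fun b => rfl
      rw [Finset.sum_congr rfl fun b _ => this b, Finset.sum_sub_distrib,
        Finset.sum_const, Finset.card_univ, Fintype.card_fin, ← Nat.cast_smul_eq_nsmul ℝ]
    have hS2ne : (S2 : ℝ) ≠ 0 := hS2R.ne'
    calc (v (r + 1) ω - Gmap f (x (r + 1) ω)) i
        = v (r + 1) ω i - Gmap f (x (r + 1) ω) i := rfl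
      _ = (S2 : ℝ)⁻¹ • (∑ b, G b) + V (T ω) i - gradient (fLoc f i) (X' (T ω) i) := by
          rw [hvi, hsum1, hGi, hvT ω]
      _ = (V (T ω) i - gradient (fLoc f i) (X (T ω) i))
            + (S2 : ℝ)⁻¹ • ((∑ b, G b) - (S2 : ℝ) • w) := by
          rw [smul_sub, smul_smul, inv_mul_cancel₀ hS2ne, one_smul, hw]
          abel
      _ = Zfun (T ω) (K ω) i := by
          rw [hZfun]
          simp only
          rw [hsum2, hA]
          rfl
  -- block average of Zfun
  have hZbar_eq : ∀ u c, blockAvg (Zfun u c) = Zbar u c := by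
    intro u c
    calc blockAvg (Zfun u c)
        = (m : ℝ)⁻¹ • ∑ i, (A u i + (S2 : ℝ)⁻¹ • ∑ b, h u i (c (b, i))) := rfl
      _ = (m : ℝ)⁻¹ • (∑ i, A u i)
          + (m : ℝ)⁻¹ • ((S2 : ℝ)⁻¹ • ∑ i, ∑ b, h u i (c (b, i))) := by
          rw [Finset.sum_add_distrib, smul_add, Finset.smul_sum]
          congr 1
          rw [← Finset.smul_sum, Finset.smul_sum]
      _ = Zbar u c := by
          rw [hZbar, smul_smul]
          rfl
  -- measurability
  have hTpre : ∀ t, MeasurableSet (T ⁻¹' {t}) := by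
    intro t
    have hset : T ⁻¹' {t} = ⋂ (s : Fin r), ⋂ (b : Fin S2), ⋂ (i : Fin m),
        (J (s.1 + 1) b i) ⁻¹' {t s b i} := by
      ext ω
      simp only [Set.mem_preimage, Set.mem_singleton_iff, Set.mem_iInter, funext_iff, hT]
    rw [hset]
    exact MeasurableSet.iInter fun s => MeasurableSet.iInter fun b =>
      MeasurableSet.iInter fun i => hJmeas _ _ _ (measurableSet_singleton _)
  have hKpre : ∀ c, MeasurableSet (K ⁻¹' {c}) := by
    intro c
    have hset : K ⁻¹' {c} = ⋂ (p : Fin S2 × Fin m), (J (r + 1) p.1 p.2) ⁻¹' {c p} := by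
      ext ω
      simp only [Set.mem_preimage, Set.mem_singleton_iff, Set.mem_iInter, funext_iff, hK]
    rw [hset]
    exact MeasurableSet.iInter fun p => hJmeas _ _ _ (measurableSet_singleton _)
  have hTKsplit : ∀ p : (Fin r → Fin S2 → Fin m → Fin n) × (Fin S2 × Fin m → Fin n),
      (fun ω => (T ω, K ω)) ⁻¹' {p} = T ⁻¹' {p.1} ∩ K ⁻¹' {p.2} := by
    intro p
    ext ω
    simp [Prod.ext_iff]
  have hTKpre : ∀ p : (Fin r → Fin S2 → Fin m → Fin n) × (Fin S2 × Fin m → Fin n),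
      MeasurableSet ((fun ω => (T ω, K ω)) ⁻¹' {p}) := by
    intro p
    rw [hTKsplit p]
    exact (hTpre p.1).inter (hKpre p.2)
  -- the product formula
  have hq : (0 : ℝ) ≤ ((n : ℝ)⁻¹) ^ (S2 * m) := by positivity
  have hwprod : ∀ t c, (μ ((fun ω => (T ω, K ω)) ⁻¹' {(t, c)})).toReal
      = (μ (T ⁻¹' {t})).toReal * ((n : ℝ)⁻¹) ^ (S2 * m) := by
    intro t c
    rw [hTKsplit (t, c)]
    have hTset : T ⁻¹' {t} = {ω | (fun (s : Fin r) b i => J (s.1 + 1) b i ω) = t} := rfl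
    have hKset : K ⁻¹' {c} = {ω | (fun p : Fin S2 × Fin m => J (r + 1) p.1 p.2 ω) = c} := rfl
    rw [hTset, hKset, dget_prod hn μ J hJunif hJindep r t c]
    rw [ENNReal.toReal_mul, ENNReal.toReal_pow, ENNReal.toReal_inv, ENNReal.toReal_natCast]
  have hwnn : ∀ t, (0 : ℝ) ≤ (μ (T ⁻¹' {t})).toReal := fun t => ENNReal.toReal_nonneg
  have hqn : ((n : ℝ)⁻¹) ^ (S2 * m) * ((n : ℝ)) ^ (S2 * m) = 1 := by
    rw [← mul_pow, inv_mul_cancel₀ hnR.ne', one_pow]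
  -- the four integrals as finite sums
  have e_x : ∫ ω, ‖x (r + 1) ω - x r ω‖ ^ 2 ∂μ
      = ∑ t, (μ (T ⁻¹' {t})).toReal * ‖Δ t‖ ^ 2 := by
    rw [show (fun ω => ‖x (r + 1) ω - x r ω‖ ^ 2) = fun ω => ‖Δ (T ω)‖ ^ 2 from
      funext fun ω => by rw [hΔT ω]]
    exact dget_integral_eq_sum μ T hTpre (fun t => ‖Δ t‖ ^ 2)
  have e_v : ∫ ω, ‖v r ω - Gmap f (x r ω)‖ ^ 2 ∂μ
      = ∑ t, (μ (T ⁻¹' {t})).toReal * ‖A t‖ ^ 2 := by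
    rw [show (fun ω => ‖v r ω - Gmap f (x r ω)‖ ^ 2) = fun ω => ‖A (T ω)‖ ^ 2 from
      funext fun ω => by rw [hAT ω]]
    exact dget_integral_eq_sum μ T hTpre (fun t => ‖A t‖ ^ 2)
  have e_v' : ∫ ω, ‖v (r + 1) ω - Gmap f (x (r + 1) ω)‖ ^ 2 ∂μ
      = ∑ t, ∑ c, ((μ (T ⁻¹' {t})).toReal * ((n : ℝ)⁻¹) ^ (S2 * m)) * ‖Zfun t c‖ ^ 2 := by
    rw [show (fun ω => ‖v (r + 1) ω - Gmap f (x (r + 1) ω)‖ ^ 2)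
        = fun ω => (fun p : (Fin r → Fin S2 → Fin m → Fin n) × (Fin S2 × Fin m → Fin n) =>
            ‖Zfun p.1 p.2‖ ^ 2) ((fun ω => (T ω, K ω)) ω) from
      funext fun ω => by simp only; rw [hvGT ω]]
    rw [dget_integral_eq_sum μ (fun ω => (T ω, K ω)) hTKpre
      (fun p => ‖Zfun p.1 p.2‖ ^ 2)]
    rw [Fintype.sum_prod_type]
    exact Finset.sum_congr rfl fun t _ => Finset.sum_congr rfl fun c _ => by
      rw [hwprod t c]
  have e_y : ∫ ω, ‖blockAvg (y r ω) - avgGrad f (x r ω)‖ ^ 2 ∂μ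
      = ∑ t, (μ (T ⁻¹' {t})).toReal * ‖blockAvg (A t)‖ ^ 2 := by
    rw [show (fun ω => ‖blockAvg (y r ω) - avgGrad f (x r ω)‖ ^ 2)
        = fun ω => ‖blockAvg (A (T ω))‖ ^ 2 from
      funext fun ω => by rw [hbar r ω, havg, ← hbsub, hAT ω]]
    exact dget_integral_eq_sum μ T hTpre (fun t => ‖blockAvg (A t)‖ ^ 2)
  have e_y' : ∫ ω, ‖blockAvg (y (r + 1) ω) - avgGrad f (x (r + 1) ω)‖ ^ 2 ∂μ
      = ∑ t, ∑ c, ((μ (T ⁻¹' {t})).toReal * ((n : ℝ)⁻¹) ^ (S2 * m)) * ‖Zbar t c‖ ^ 2 := by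
    rw [show (fun ω => ‖blockAvg (y (r + 1) ω) - avgGrad f (x (r + 1) ω)‖ ^ 2)
        = fun ω => (fun p : (Fin r → Fin S2 → Fin m → Fin n) × (Fin S2 × Fin m → Fin n) =>
            ‖Zbar p.1 p.2‖ ^ 2) ((fun ω => (T ω, K ω)) ω) from
      funext fun ω => by
        simp only
        rw [hbar (r + 1) ω, havg, ← hbsub, hvGT ω, hZbar_eq]]
    rw [dget_integral_eq_sum μ (fun ω => (T ω, K ω)) hTKpre
      (fun p => ‖Zbar p.1 p.2‖ ^ 2)]
    rw [Fintype.sum_prod_type]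
    exact Finset.sum_congr rfl fun t _ => Finset.sum_congr rfl fun c _ => by
      rw [hwprod t c]
  constructor
  · -- gradient tracking error
    rw [e_y', e_y, e_x]
    have per_t : ∀ t, ∑ c, ((μ (T ⁻¹' {t})).toReal * ((n : ℝ)⁻¹) ^ (S2 * m)) * ‖Zbar t c‖ ^ 2
        ≤ (μ (T ⁻¹' {t})).toReal * ‖blockAvg (A t)‖ ^ 2
          + L ^ 2 / ((m : ℝ) * S2) * ((μ (T ⁻¹' {t})).toReal * ‖Δ t‖ ^ 2) := by
      intro t
      rw [← Finset.mul_sum]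
      have hpert := dget_pert1 hn hS2 hm L (blockAvg (A t)) (Δ t) (h t) (hz t) (hbnd t)
        (Zbar t) (fun c => rfl)
      calc ((μ (T ⁻¹' {t})).toReal * ((n : ℝ)⁻¹) ^ (S2 * m)) * ∑ c, ‖Zbar t c‖ ^ 2
          ≤ ((μ (T ⁻¹' {t})).toReal * ((n : ℝ)⁻¹) ^ (S2 * m)) *
            ((n : ℝ) ^ (S2 * m) * (‖blockAvg (A t)‖ ^ 2
              + L ^ 2 / ((m : ℝ) * (S2 : ℝ)) * ‖Δ t‖ ^ 2)) := by
            apply mul_le_mul_of_nonneg_left hpert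
            exact mul_nonneg (hwnn t) hq
        _ = (μ (T ⁻¹' {t})).toReal * (‖blockAvg (A t)‖ ^ 2
              + L ^ 2 / ((m : ℝ) * (S2 : ℝ)) * ‖Δ t‖ ^ 2) := by
            rw [mul_assoc, ← mul_assoc (((n : ℝ)⁻¹) ^ (S2 * m)), hqn, one_mul]
        _ = (μ (T ⁻¹' {t})).toReal * ‖blockAvg (A t)‖ ^ 2
              + L ^ 2 / ((m : ℝ) * S2) * ((μ (T ⁻¹' {t})).toReal * ‖Δ t‖ ^ 2) := by
            ring
    calc ∑ t, ∑ c, ((μ (T ⁻¹' {t})).toReal * ((n : ℝ)⁻¹) ^ (S2 * m)) * ‖Zbar t c‖ ^ 2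
        ≤ ∑ t, ((μ (T ⁻¹' {t})).toReal * ‖blockAvg (A t)‖ ^ 2
            + L ^ 2 / ((m : ℝ) * S2) * ((μ (T ⁻¹' {t})).toReal * ‖Δ t‖ ^ 2)) :=
          Finset.sum_le_sum fun t _ => per_t t
      _ = (∑ t, (μ (T ⁻¹' {t})).toReal * ‖blockAvg (A t)‖ ^ 2)
            + L ^ 2 / ((m : ℝ) * S2) * ∑ t, (μ (T ⁻¹' {t})).toReal * ‖Δ t‖ ^ 2 := by
          rw [Finset.sum_add_distrib, ← Finset.mul_sum]
  · -- estimation error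
    rw [e_v', e_v, e_x]
    have per_t : ∀ t, ∑ c, ((μ (T ⁻¹' {t})).toReal * ((n : ℝ)⁻¹) ^ (S2 * m)) * ‖Zfun t c‖ ^ 2
        ≤ (μ (T ⁻¹' {t})).toReal * ‖A t‖ ^ 2
          + L ^ 2 / (S2 : ℝ) * ((μ (T ⁻¹' {t})).toReal * ‖Δ t‖ ^ 2) := by
      intro t
      rw [← Finset.mul_sum]
      have hpert := dget_pert2 hn hS2 hm L (A t) (Δ t) (h t) (hz t) (hbnd t)
        (Zfun t) (fun c i => rfl)
      calc ((μ (T ⁻¹' {t})).toReal * ((n : ℝ)⁻¹) ^ (S2 * m)) * ∑ c, ‖Zfun t c‖ ^ 2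
          ≤ ((μ (T ⁻¹' {t})).toReal * ((n : ℝ)⁻¹) ^ (S2 * m)) *
            ((n : ℝ) ^ (S2 * m) * (‖A t‖ ^ 2 + L ^ 2 / (S2 : ℝ) * ‖Δ t‖ ^ 2)) := by
            apply mul_le_mul_of_nonneg_left hpert
            exact mul_nonneg (hwnn t) hq
        _ = (μ (T ⁻¹' {t})).toReal * (‖A t‖ ^ 2 + L ^ 2 / (S2 : ℝ) * ‖Δ t‖ ^ 2) := by
            rw [mul_assoc, ← mul_assoc (((n : ℝ)⁻¹) ^ (S2 * m)), hqn, one_mul]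
        _ = (μ (T ⁻¹' {t})).toReal * ‖A t‖ ^ 2
              + L ^ 2 / (S2 : ℝ) * ((μ (T ⁻¹' {t})).toReal * ‖Δ t‖ ^ 2) := by
            ring
    calc ∑ t, ∑ c, ((μ (T ⁻¹' {t})).toReal * ((n : ℝ)⁻¹) ^ (S2 * m)) * ‖Zfun t c‖ ^ 2
        ≤ ∑ t, ((μ (T ⁻¹' {t})).toReal * ‖A t‖ ^ 2
            + L ^ 2 / (S2 : ℝ) * ((μ (T ⁻¹' {t})).toReal * ‖Δ t‖ ^ 2)) :=
          Finset.sum_le_sum fun t _ => per_t t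
      _ = (∑ t, (μ (T ⁻¹' {t})).toReal * ‖A t‖ ^ 2)
            + L ^ 2 / (S2 : ℝ) * ∑ t, (μ (T ⁻¹' {t})).toReal * ‖Δ t‖ ^ 2 := by
          rw [Finset.sum_add_distrib, ← Finset.mul_sum]
end
end
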